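/- arXiv:2605.16904 — 4 statements merged into one kernel-verified Lean document; each statement's English description precedes it below -/
import Mathlib

section
/- Let θ be a strictly positive stochastic matrix on a finite set Σ with stationary distribution q (strictly positive), and let κ > 0 be such that θ(a,b) ≥ κ q(b) for all a, b. Then for every probability distribution p on Σ, D(pθ ‖ q) ≤ (1 − κ) D(p ‖ q). -/
open scoped BigOperators

/-- Kullback-Leibler divergence between two distributions on a finite set (real-valued). -/
noncomputable def Dkl {α : Type*} [Fintype α] (p q : α → ℝ) : ℝ :=
  ∑ a, p a * Real.log (p a / q a)

/-- Log-sum inequality, positive denominators. -/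
lemma log_sum_le_pos {ι : Type*} (s : Finset ι) (a b : ι → ℝ) (ha : ∀ i ∈ s, 0 ≤ a i)
    (hb : ∀ i ∈ s, 0 < b i) :
    (∑ i ∈ s, a i) * Real.log ((∑ i ∈ s, a i) / (∑ i ∈ s, b i)) ≤
      ∑ i ∈ s, a i * Real.log (a i / b i) := by
  rcases s.eq_empty_or_nonempty with rfl | hs
  · simp
  set A := ∑ i ∈ s, a i with hA
  set B := ∑ i ∈ s, b i with hB
  have hBpos : 0 < B := Finset.sum_pos hb hs
  have hw0 : ∀ i ∈ s, (0:ℝ) ≤ b i / B := fun i hi => div_nonneg (hb i hi).le hBpos.le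
  have hw1 : ∑ i ∈ s, b i / B = 1 := by
    rw [← Finset.sum_div, ← hB]; field_simp
  have hmem : ∀ i ∈ s, a i / b i ∈ Set.Ici (0:ℝ) := fun i hi =>
    div_nonneg (ha i hi) (hb i hi).le
  have jensen := Real.convexOn_mul_log.map_sum_le hw0 hw1 hmem
  have hpt : ∑ i ∈ s, (b i / B) • (a i / b i) = A / B := by
    have hterm : ∀ i ∈ s, (b i / B) • (a i / b i) = a i / B := fun i hi => by
      have hbne := (hb i hi).ne'
      simp only [smul_eq_mul]
      field_simp
    rw [Finset.sum_congr rfl hterm, ← Finset.sum_div]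
  rw [hpt] at jensen
  have key : (A / B) * Real.log (A / B) ≤ (1 / B) * ∑ i ∈ s, a i * Real.log (a i / b i) := by
    refine jensen.trans_eq ?_
    rw [Finset.mul_sum]
    refine Finset.sum_congr rfl fun i hi => ?_
    have hbne := (hb i hi).ne'
    simp only [smul_eq_mul]
    field_simp
  have := mul_le_mul_of_nonneg_left key hBpos.le
  calc A * Real.log (A / B) = B * ((A / B) * Real.log (A / B)) := by
        field_simp
      _ ≤ B * ((1 / B) * ∑ i ∈ s, a i * Real.log (a i / b i)) := this
      _ = ∑ i ∈ s, a i * Real.log (a i / b i) := by field_simp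

/-- Log-sum inequality, nonnegative denominators vanishing only where numerators do. -/
lemma log_sum_le {ι : Type*} (s : Finset ι) (a b : ι → ℝ) (ha : ∀ i ∈ s, 0 ≤ a i)
    (hb : ∀ i ∈ s, 0 ≤ b i) (hab : ∀ i ∈ s, b i = 0 → a i = 0) :
    (∑ i ∈ s, a i) * Real.log ((∑ i ∈ s, a i) / (∑ i ∈ s, b i)) ≤
      ∑ i ∈ s, a i * Real.log (a i / b i) := by
  classical
  set t := s.filter (fun i => 0 < b i) with ht
  have hat : ∑ i ∈ s, a i = ∑ i ∈ t, a i := by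
    rw [ht, Finset.sum_filter]
    refine Finset.sum_congr rfl fun i hi => ?_
    by_cases h : 0 < b i
    · simp [h]
    · have : b i = 0 := le_antisymm (not_lt.mp h) (hb i hi)
      simp [h, hab i hi this]
  have hbt : ∑ i ∈ s, b i = ∑ i ∈ t, b i := by
    rw [ht, Finset.sum_filter]
    refine Finset.sum_congr rfl fun i hi => ?_
    by_cases h : 0 < b i
    · simp [h]
    · have : b i = 0 := le_antisymm (not_lt.mp h) (hb i hi)
      simp [h, this]
  have hrt : ∑ i ∈ s, a i * Real.log (a i / b i)
      = ∑ i ∈ t, a i * Real.log (a i / b i) := by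
    rw [ht, Finset.sum_filter]
    refine Finset.sum_congr rfl fun i hi => ?_
    by_cases h : 0 < b i
    · simp [h]
    · have : b i = 0 := le_antisymm (not_lt.mp h) (hb i hi)
      simp [h, hab i hi this]
  rw [hat, hbt, hrt]
  exact log_sum_le_pos t a b (fun i hi => ha i (Finset.mem_filter.mp hi).1)
    (fun i hi => (Finset.mem_filter.mp hi).2)

/-- Strong data processing inequality: if `θ : S × S → (0,1)` is a strictly positive stochastic
matrix with stationary distribution `q : S → (0,1)`, and `κ > 0` satisfies `θ(a,b) ≥ κ q(b)`
for all `a, b`, then `D(pθ ‖ q) ≤ (1 − κ) D(p ‖ q)` for every probability distribution `p`. -/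
theorem stmt3 {S : Type*} [Fintype S]
    (θ : S → S → ℝ) (q : S → ℝ) (κ : ℝ)
    (hθpos : ∀ a b, 0 < θ a b) (hθlt : ∀ a b, θ a b < 1)
    (hθ1 : ∀ a, ∑ b, θ a b = 1)
    (hqpos : ∀ a, 0 < q a) (hqlt : ∀ a, q a < 1) (hq1 : ∑ a, q a = 1)
    (hstat : ∀ b, ∑ a, q a * θ a b = q b)
    (hκ : 0 < κ) (hκθ : ∀ a b, κ * q b ≤ θ a b)
    (p : S → ℝ) (hp0 : ∀ a, 0 ≤ p a) (hp1 : ∑ a, p a = 1) :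
    Dkl (fun b => ∑ a, p a * θ a b) q ≤ (1 - κ) * Dkl p q := by
  classical
  have hSne : Nonempty S := by
    by_contra h
    rw [not_nonempty_iff] at h
    simp [Finset.univ_eq_empty] at hq1
  obtain ⟨a₀⟩ := hSne
  have hκ1 : κ ≤ 1 := by
    have h1 : ∑ b, κ * q b ≤ ∑ b, θ a₀ b := Finset.sum_le_sum fun b _ => hκθ a₀ b
    rw [← Finset.mul_sum, hq1, hθ1, mul_one] at h1
    exact h1
  rcases eq_or_lt_of_le hκ1 with hκeq | hκlt
  · -- κ = 1 : θ a b = q b, so pθ = q, both sides 0.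
    have hθq : ∀ a b, θ a b = q b := by
      intro a b
      have hsum : ∑ c, (θ a c - q c) = 0 := by
        rw [Finset.sum_sub_distrib, hθ1, hq1, sub_self]
      have hnn : ∀ c ∈ Finset.univ, (0:ℝ) ≤ θ a c - q c := fun c _ => by
        have := hκθ a c; rw [hκeq, one_mul] at this; linarith
      have := (Finset.sum_eq_zero_iff_of_nonneg hnn).mp hsum b (Finset.mem_univ b)
      linarith
    have hpθ : (fun b => ∑ a, p a * θ a b) = q := by
      funext b
      simp only [hθq, ← Finset.sum_mul, hp1, one_mul]
    rw [hpθ, ← hκeq]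
    simp [Dkl, div_self (hqpos _).ne']
  · -- κ < 1
    set κ' := 1 - κ with hκ'
    have hκ'pos : 0 < κ' := by simp [hκ']; linarith
    set θ' : S → S → ℝ := fun a b => (θ a b - κ * q b) / κ' with hθ'
    have hθ'0 : ∀ a b, 0 ≤ θ' a b := fun a b =>
      div_nonneg (by have := hκθ a b; linarith) hκ'pos.le
    have hθ'1 : ∀ a, ∑ b, θ' a b = 1 := by
      intro a
      rw [hθ', ← Finset.sum_div, Finset.sum_sub_distrib, hθ1, ← Finset.mul_sum, hq1]
      field_simp
      exact hκ'.symm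
    have hθ'stat : ∀ b, ∑ a, q a * θ' a b = q b := by
      intro b
      have h1 : ∑ a, q a * θ' a b = (∑ a, (q a * θ a b - κ * q b * q a)) / κ' := by
        rw [Finset.sum_div]
        refine Finset.sum_congr rfl fun a _ => ?_
        rw [hθ']
        field_simp
      rw [h1, Finset.sum_sub_distrib, hstat, ← Finset.mul_sum, hq1, mul_one, hκ']
      field_simp
    set P' : S → ℝ := fun b => ∑ a, p a * θ' a b with hP'
    have hP'0 : ∀ b, 0 ≤ P' b := fun b =>
      Finset.sum_nonneg fun a _ => mul_nonneg (hp0 a) (hθ'0 a b)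
    have hdecomp : ∀ b, ∑ a, p a * θ a b = κ * q b + κ' * P' b := by
      intro b
      rw [hP']
      have : ∀ a, p a * θ a b = p a * (κ * q b) + κ' * (p a * θ' a b) := by
        intro a
        rw [hθ']
        field_simp
        ring
      rw [Finset.sum_congr rfl fun a _ => this a, Finset.sum_add_distrib,
        ← Finset.sum_mul, hp1, one_mul, ← Finset.mul_sum]
    -- Step B : pointwise two-term log-sum
    have stepB : ∀ b, (∑ a, p a * θ a b) * Real.log ((∑ a, p a * θ a b) / q b) ≤
        κ' * (P' b * Real.log (P' b / q b)) := by
      intro b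
      have h2 := log_sum_le_pos (Finset.univ : Finset (Fin 2))
        ![κ * q b, κ' * P' b] ![κ * q b, κ' * q b]
        (by
          intro i _
          fin_cases i
          · exact mul_nonneg hκ.le (hqpos b).le
          · exact mul_nonneg hκ'pos.le (hP'0 b))
        (by
          intro i _
          fin_cases i
          · exact mul_pos hκ (hqpos b)
          · exact mul_pos hκ'pos (hqpos b))
      rw [Fin.sum_univ_two, Fin.sum_univ_two, Fin.sum_univ_two] at h2
      simp only [Matrix.cons_val_zero, Matrix.cons_val_one, Matrix.head_cons] at h2
      have hqne := (hqpos b).ne'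
      have hκne := hκ.ne'
      have hκ'ne := hκ'pos.ne'
      have e1 : κ * q b + κ' * P' b = ∑ a, p a * θ a b := (hdecomp b).symm
      have e2 : κ * q b + κ' * q b = q b := by rw [hκ']; ring
      rw [e1, e2] at h2
      have e3 : (κ * q b) * Real.log ((κ * q b) / (κ * q b)) = 0 := by
        rw [div_self (by positivity), Real.log_one, mul_zero]
      have e4 : (κ' * P' b) * Real.log ((κ' * P' b) / (κ' * q b)) =
          κ' * (P' b * Real.log (P' b / q b)) := by
        rw [mul_div_mul_left _ _ hκ'ne]
        ring
      rw [e3, e4, zero_add] at h2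
      exact h2
    -- Step A : pointwise data processing log-sum
    have stepA : ∀ b, P' b * Real.log (P' b / q b) ≤
        ∑ a, (p a * θ' a b) * Real.log (p a / q a) := by
      intro b
      have hA := log_sum_le (Finset.univ : Finset S)
        (fun a => p a * θ' a b) (fun a => q a * θ' a b)
        (fun a _ => mul_nonneg (hp0 a) (hθ'0 a b))
        (fun a _ => mul_nonneg (hqpos a).le (hθ'0 a b))
        (by
          intro a _ h
          show p a * θ' a b = 0
          rcases mul_eq_zero.mp h with h' | h'
          · exact absurd h' (hqpos a).ne'
          · rw [h', mul_zero])
      rw [hθ'stat b] at hA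
      refine hA.trans (Finset.sum_le_sum fun a _ => ?_)
      show (p a * θ' a b) * Real.log ((p a * θ' a b) / (q a * θ' a b)) ≤ _
      by_cases hz : θ' a b = 0
      · simp [hz]
      · rw [mul_div_mul_right _ _ hz]
    -- Combine
    have main : Dkl (fun b => ∑ a, p a * θ a b) q ≤
        κ' * ∑ b, ∑ a, (p a * θ' a b) * Real.log (p a / q a) := by
      rw [Dkl, Finset.mul_sum]
      refine Finset.sum_le_sum fun b _ => ?_
      exact (stepB b).trans (mul_le_mul_of_nonneg_left (stepA b) hκ'pos.le)
    have hswap : ∑ b, ∑ a, (p a * θ' a b) * Real.log (p a / q a) = Dkl p q := by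
      rw [Finset.sum_comm, Dkl]
      refine Finset.sum_congr rfl fun a _ => ?_
      have : ∀ b, (p a * θ' a b) * Real.log (p a / q a)
          = θ' a b * (p a * Real.log (p a / q a)) := fun b => by ring
      rw [Finset.sum_congr rfl fun b _ => this b, ← Finset.sum_mul, hθ'1, one_mul]
    rw [hswap] at main
    exact main
end

section
/- Let θ be a strictly positive stochastic matrix on a finite set Σ with stationary distribution q, and κ > 0 with θ(a,b) ≥ κ q(b) for all a,b. Let θ_n be the stochastic matrix on Σ^n given by θ_n(a,b) = Π_{i=1}^n θ(a_i, b_i) (synchronous independent updating of n coordinates). Then for every probability distribution p on Σ^n, D(p θ_n ‖ q^{⊗n}) ≤ (1 − κ) D(p ‖ q^{⊗n}), where q^{⊗n} is the product distribution with marginal q. -/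
open scoped BigOperators

open Finset

/-- The log-sum inequality. -/
lemma logsum {ι : Type*} (s : Finset ι) (x y : ι → ℝ)
    (hx : ∀ i ∈ s, 0 ≤ x i) (hy : ∀ i ∈ s, 0 ≤ y i)
    (h0 : ∀ i ∈ s, y i = 0 → x i = 0) :
    (∑ i ∈ s, x i) * Real.log ((∑ i ∈ s, x i) / (∑ i ∈ s, y i)) ≤
      ∑ i ∈ s, x i * Real.log (x i / y i) := by
  have hX0 : 0 ≤ ∑ i ∈ s, x i := Finset.sum_nonneg hx
  have hY0 : 0 ≤ ∑ i ∈ s, y i := Finset.sum_nonneg hy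
  rcases eq_or_lt_of_le hY0 with hY | hY
  · have hy0 : ∀ i ∈ s, y i = 0 := fun i hi =>
      (Finset.sum_eq_zero_iff_of_nonneg hy).mp hY.symm i hi
    have hx0 : ∀ i ∈ s, x i = 0 := fun i hi => h0 i hi (hy0 i hi)
    rw [Finset.sum_eq_zero hx0, zero_mul]
    exact Finset.sum_nonneg fun i hi => by rw [hx0 i hi, zero_mul]
  rcases eq_or_lt_of_le hX0 with hX | hX
  · rw [← hX, zero_mul]
    refine Finset.sum_nonneg fun i hi => ?_
    have : x i = 0 := (Finset.sum_eq_zero_iff_of_nonneg hx).mp hX.symm i hi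
    rw [this, zero_mul]
  have key : ∀ i ∈ s, x i * Real.log ((∑ j ∈ s, x j) / (∑ j ∈ s, y j))
      + (x i - y i * ((∑ j ∈ s, x j) / (∑ j ∈ s, y j))) ≤ x i * Real.log (x i / y i) := by
    intro i hi
    by_cases hxi : x i = 0
    · have : 0 ≤ y i * ((∑ j ∈ s, x j) / (∑ j ∈ s, y j)) :=
        mul_nonneg (hy i hi) (div_nonneg hX0 hY0)
      rw [hxi]
      simp only [zero_mul, zero_add, zero_sub]
      linarith
    · have hxpos : 0 < x i := lt_of_le_of_ne (hx i hi) (Ne.symm hxi)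
      have hypos : 0 < y i := by
        rcases eq_or_lt_of_le (hy i hi) with h | h
        · exact absurd (h0 i hi h.symm) hxi
        · exact h
      set X := ∑ j ∈ s, x j
      set Y := ∑ j ∈ s, y j
      have h1 : Real.log ((X / Y) * (y i / x i)) ≤ (X / Y) * (y i / x i) - 1 :=
        Real.log_le_sub_one_of_pos (by positivity)
      rw [Real.log_mul (by positivity) (by positivity)] at h1
      have h5 : Real.log (y i / x i) = -Real.log (x i / y i) := by
        rw [← Real.log_inv, inv_div]
      rw [h5] at h1
      have h3 := mul_le_mul_of_nonneg_left h1 hxpos.le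
      have h4 : x i * ((X / Y) * (y i / x i)) = (X / Y) * y i := by
        field_simp
      nlinarith [h3, h4]
  calc (∑ i ∈ s, x i) * Real.log ((∑ i ∈ s, x i) / (∑ i ∈ s, y i))
      = ∑ i ∈ s, (x i * Real.log ((∑ j ∈ s, x j) / (∑ j ∈ s, y j))
          + (x i - y i * ((∑ j ∈ s, x j) / (∑ j ∈ s, y j)))) := by
        rw [Finset.sum_add_distrib, ← Finset.sum_mul, Finset.sum_sub_distrib, ← Finset.sum_mul]
        have : (∑ i ∈ s, y i) * ((∑ j ∈ s, x j) / (∑ j ∈ s, y j)) = ∑ j ∈ s, x j := by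
          field_simp
        rw [this]
        ring
    _ ≤ ∑ i ∈ s, x i * Real.log (x i / y i) := Finset.sum_le_sum key

lemma term_cancel_left (w ν r : ℝ) :
    (w * ν) * Real.log ((w * ν) / (w * r)) = w * (ν * Real.log (ν / r)) := by
  rcases eq_or_ne w 0 with h | h
  · simp [h]
  · rw [mul_div_mul_left _ _ h]; ring

lemma term_cancel_right (p q m : ℝ) :
    (p * m) * Real.log ((p * m) / (q * m)) = (p * Real.log (p / q)) * m := by
  rcases eq_or_ne m 0 with h | h
  · simp [h]
  · rw [mul_div_mul_right _ _ h]; ring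

lemma Dkl_congr {α : Type*} [Fintype α] {p p' q q' : α → ℝ}
    (h1 : ∀ a, p a = p' a) (h2 : ∀ a, q a = q' a) : Dkl p q = Dkl p' q' := by
  unfold Dkl
  exact Finset.sum_congr rfl fun a _ => by rw [h1, h2]

lemma Dkl_equiv {α β : Type*} [Fintype α] [Fintype β] (e : β ≃ α) (p q : α → ℝ) :
    Dkl p q = Dkl (fun b => p (e b)) (fun b => q (e b)) :=
  (Fintype.sum_equiv e (fun b => p (e b) * Real.log (p (e b) / q (e b)))
    (fun a => p a * Real.log (p a / q a)) (fun _ => rfl)).symm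

lemma Dkl_self {α : Type*} [Fintype α] (q : α → ℝ) (hq : ∀ a, 0 < q a) : Dkl q q = 0 := by
  unfold Dkl
  refine Finset.sum_eq_zero fun a _ => ?_
  rw [div_self (hq a).ne', Real.log_one, mul_zero]

/-- Convexity of KL divergence in the first argument, mixture version. -/
lemma Dkl_mix {α ι : Type*} [Fintype α] (s : Finset ι) (w : ι → ℝ) (ν : ι → α → ℝ) (r : α → ℝ)
    (hw : ∀ i ∈ s, 0 ≤ w i) (hw1 : ∑ i ∈ s, w i = 1)
    (hν : ∀ i ∈ s, ∀ b, 0 ≤ ν i b) (hr : ∀ b, 0 < r b) :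
    Dkl (fun b => ∑ i ∈ s, w i * ν i b) r ≤ ∑ i ∈ s, w i * Dkl (ν i) r := by
  unfold Dkl
  have hrhs : ∑ i ∈ s, w i * ∑ b, ν i b * Real.log (ν i b / r b)
      = ∑ b, ∑ i ∈ s, (w i * ν i b) * Real.log ((w i * ν i b) / (w i * r b)) := by
    rw [Finset.sum_comm]
    refine Finset.sum_congr rfl fun i _ => ?_
    rw [Finset.mul_sum]
    exact Finset.sum_congr rfl fun b _ => (term_cancel_left _ _ _).symm
  rw [hrhs]
  refine Finset.sum_le_sum fun b _ => ?_
  have hb := logsum s (fun i => w i * ν i b) (fun i => w i * r b)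
    (fun i hi => mul_nonneg (hw i hi) (hν i hi b))
    (fun i hi => mul_nonneg (hw i hi) (hr b).le)
    (fun i hi hzero => by
      have hwi : w i = 0 := by
        rcases mul_eq_zero.mp hzero with h | h
        · exact h
        · exact absurd h (hr b).ne'
      show w i * ν i b = 0
      rw [hwi, zero_mul])
  have hy : ∑ i ∈ s, w i * r b = r b := by rw [← Finset.sum_mul, hw1, one_mul]
  rwa [hy] at hb

/-- Data processing inequality for KL divergence. -/
lemma Dkl_dpi {α β : Type*} [Fintype α] [Fintype β] (p q : α → ℝ) (M : α → β → ℝ)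
    (hp : ∀ a, 0 ≤ p a) (hq : ∀ a, 0 < q a)
    (hM0 : ∀ a b, 0 ≤ M a b) (hM1 : ∀ a, ∑ b, M a b = 1) :
    Dkl (fun b => ∑ a, p a * M a b) (fun b => ∑ a, q a * M a b) ≤ Dkl p q := by
  unfold Dkl
  have hrhs : ∑ a, p a * Real.log (p a / q a)
      = ∑ b, ∑ a, (p a * M a b) * Real.log ((p a * M a b) / (q a * M a b)) := by
    rw [Finset.sum_comm]
    refine Finset.sum_congr rfl fun a _ => ?_
    have : ∀ b, (p a * M a b) * Real.log ((p a * M a b) / (q a * M a b))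
        = (p a * Real.log (p a / q a)) * M a b := fun b => term_cancel_right _ _ _
    rw [Finset.sum_congr rfl fun b _ => this b, ← Finset.mul_sum, hM1, mul_one]
  rw [hrhs]
  refine Finset.sum_le_sum fun b _ => ?_
  exact logsum univ (fun a => p a * M a b) (fun a => q a * M a b)
    (fun a _ => mul_nonneg (hp a) (hM0 a b))
    (fun a _ => mul_nonneg (hq a).le (hM0 a b))
    (fun a _ hzero => by
      have : M a b = 0 := by
        rcases mul_eq_zero.mp hzero with h | h
        · exact absurd h (hq a).ne'
        · exact h
      show p a * M a b = 0
      rw [this, mul_zero])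

/-- Two-point convexity of KL in the first argument. -/
lemma Dkl_conv2 {α : Type*} [Fintype α] (κ : ℝ) (hκ0 : 0 ≤ κ) (hκ1 : κ ≤ 1)
    (ν₁ ν₂ r : α → ℝ) (hν₁ : ∀ b, 0 ≤ ν₁ b) (hν₂ : ∀ b, 0 ≤ ν₂ b) (hr : ∀ b, 0 < r b) :
    Dkl (fun b => κ * ν₁ b + (1 - κ) * ν₂ b) r ≤ κ * Dkl ν₁ r + (1 - κ) * Dkl ν₂ r := by
  have := Dkl_mix (univ : Finset Bool) (fun i => bif i then κ else 1 - κ)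
    (fun i => bif i then ν₁ else ν₂) r
    (fun i _ => by cases i <;> simp [hκ0] <;> linarith)
    (by simp)
    (fun i _ b => by cases i <;> simp [hν₁ b, hν₂ b]) hr
  simpa [Fintype.sum_bool, add_comm] using this

/-- Single-site strong data processing inequality under the Doeblin condition. -/
lemma sdpi_one {S : Type*} [Fintype S] (θ : S → S → ℝ) (q : S → ℝ) (κ : ℝ)
    (hθpos : ∀ a b, 0 < θ a b) (hθ1 : ∀ a, ∑ b, θ a b = 1)
    (hqpos : ∀ a, 0 < q a) (hq1 : ∑ a, q a = 1)
    (hstat : ∀ b, ∑ a, q a * θ a b = q b)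
    (hκ0 : 0 ≤ κ) (hκ1 : κ ≤ 1) (hκθ : ∀ a b, κ * q b ≤ θ a b)
    (p : S → ℝ) (hp0 : ∀ a, 0 ≤ p a) (hp1 : ∑ a, p a = 1) :
    Dkl (fun b => ∑ a, p a * θ a b) q ≤ (1 - κ) * Dkl p q := by
  rcases eq_or_lt_of_le hκ1 with hk | hk
  · -- κ = 1 : then θ a b = q b for all a b, and p θ = q.
    have hθq : ∀ a b, θ a b = q b := by
      intro a b
      have hsum : ∑ b', (θ a b' - q b') = 0 := by
        rw [Finset.sum_sub_distrib, hθ1, hq1, sub_self]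
      have hnn : ∀ b' ∈ univ, 0 ≤ θ a b' - q b' := by
        intro b' _
        have := hκθ a b'
        rw [hk, one_mul] at this
        linarith
      have := (Finset.sum_eq_zero_iff_of_nonneg hnn).mp hsum b (mem_univ b)
      linarith
    have hpθ : ∀ b, (∑ a, p a * θ a b) = q b := by
      intro b
      calc (∑ a, p a * θ a b) = ∑ a, p a * q b := by
            exact Finset.sum_congr rfl fun a _ => by rw [hθq]
        _ = q b := by rw [← Finset.sum_mul, hp1, one_mul]
    rw [Dkl_congr hpθ (fun a => rfl), Dkl_self q hqpos, ← hk]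
    simp
  · -- κ < 1
    have h1κ : 0 < 1 - κ := by linarith
    set M : S → S → ℝ := fun a b => (θ a b - κ * q b) / (1 - κ) with hMdef
    have hM0 : ∀ a b, 0 ≤ M a b := fun a b =>
      div_nonneg (by linarith [hκθ a b]) h1κ.le
    have hM1 : ∀ a, ∑ b, M a b = 1 := by
      intro a
      rw [← Finset.sum_div, Finset.sum_sub_distrib, hθ1, ← Finset.mul_sum, hq1, mul_one,
        div_self h1κ.ne']
    have hstatM : ∀ b, ∑ a, q a * M a b = q b := by
      intro b
      have step : ∀ a, q a * M a b = (q a * θ a b - q a * (κ * q b)) / (1 - κ) := by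
        intro a
        rw [hMdef]
        field_simp
      rw [Finset.sum_congr rfl fun a _ => step a, ← Finset.sum_div, Finset.sum_sub_distrib,
        hstat, ← Finset.sum_mul, hq1, one_mul]
      field_simp
    have hdecomp : ∀ b, (∑ a, p a * θ a b) = κ * q b + (1 - κ) * ∑ a, p a * M a b := by
      intro b
      have step : ∀ a, p a * θ a b = p a * (κ * q b) + (1 - κ) * (p a * M a b) := by
        intro a
        rw [hMdef]
        field_simp
        ring
      rw [Finset.sum_congr rfl fun a _ => step a, Finset.sum_add_distrib, ← Finset.sum_mul,
        hp1, one_mul, ← Finset.mul_sum]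
    have hconv := Dkl_conv2 κ hκ0 hκ1 q (fun b => ∑ a, p a * M a b) q
      (fun b => (hqpos b).le)
      (fun b => Finset.sum_nonneg fun a _ => mul_nonneg (hp0 a) (hM0 a b)) hqpos
    have hdpi : Dkl (fun b => ∑ a, p a * M a b) q ≤ Dkl p q := by
      rw [Dkl_congr (p' := fun b => ∑ a, p a * M a b) (fun b => rfl)
        (fun b => (hstatM b).symm)]
      exact Dkl_dpi p q M hp0 hqpos hM0 hM1
    calc Dkl (fun b => ∑ a, p a * θ a b) q
        = Dkl (fun b => κ * q b + (1 - κ) * ∑ a, p a * M a b) q :=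
          Dkl_congr hdecomp (fun _ => rfl)
      _ ≤ κ * Dkl q q + (1 - κ) * Dkl (fun b => ∑ a, p a * M a b) q := hconv
      _ = (1 - κ) * Dkl (fun b => ∑ a, p a * M a b) q := by
          rw [Dkl_self q hqpos]; ring
      _ ≤ (1 - κ) * Dkl p q := mul_le_mul_of_nonneg_left hdpi h1κ.le

/-- Chain rule for KL divergence against a product reference measure. -/
lemma Dkl_chain {A B : Type*} [Fintype A] [Fintype B] (P : A → B → ℝ) (r1 : A → ℝ) (r2 : B → ℝ)
    (hP : ∀ a b, 0 ≤ P a b) (hr1 : ∀ a, 0 < r1 a) (hr2 : ∀ b, 0 < r2 b) :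
    Dkl (fun x : A × B => P x.1 x.2) (fun x : A × B => r1 x.1 * r2 x.2)
      = Dkl (fun a => ∑ b, P a b) r1
        + ∑ a, (∑ b, P a b) * Dkl (fun b => P a b / ∑ b', P a b') r2 := by
  unfold Dkl
  rw [Fintype.sum_prod_type, ← Finset.sum_add_distrib]
  refine Finset.sum_congr rfl fun a _ => ?_
  have key : ∀ b, P a b * Real.log (P a b / (r1 a * r2 b))
      = P a b * Real.log ((∑ b', P a b') / r1 a)
        + (∑ b', P a b') * ((P a b / ∑ b', P a b')
            * Real.log ((P a b / ∑ b', P a b') / r2 b)) := by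
    intro b
    by_cases h : P a b = 0
    · simp [h]
    · have hPab : 0 < P a b := lt_of_le_of_ne (hP a b) (Ne.symm h)
      have hP1 : 0 < ∑ b', P a b' :=
        lt_of_lt_of_le hPab (Finset.single_le_sum (fun b' _ => hP a b') (mem_univ b))
      have e1 : (∑ b', P a b') * (P a b / ∑ b', P a b') = P a b := by
        field_simp
      rw [← mul_assoc, e1, ← mul_add,
        ← Real.log_mul (div_pos hP1 (hr1 a)).ne' (div_pos (div_pos hPab hP1) (hr2 b)).ne']
      congr 2
      field_simp [hP1.ne', (hr1 a).ne', (hr2 b).ne']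
  rw [Finset.sum_congr rfl fun b _ => key b, Finset.sum_add_distrib, ← Finset.sum_mul,
    ← Finset.mul_sum]

/-- Tensorization of the strong data processing inequality for a two-component product. -/
lemma tensor {A B : Type*} [Fintype A] [Fintype B] (η : ℝ) (hη : 0 ≤ η)
    (K1 : A → A → ℝ) (K2 : B → B → ℝ) (r1 : A → ℝ) (r2 : B → ℝ)
    (hK1pos : ∀ a a', 0 < K1 a a') (hK11 : ∀ a, ∑ a', K1 a a' = 1)
    (hK20 : ∀ b b', 0 ≤ K2 b b') (hK21 : ∀ b, ∑ b', K2 b b' = 1)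
    (hr1 : ∀ a, 0 < r1 a) (hr2 : ∀ b, 0 < r2 b)
    (h1 : ∀ p : A → ℝ, (∀ a, 0 ≤ p a) → (∑ a, p a) = 1 →
      Dkl (fun a' => ∑ a, p a * K1 a a') r1 ≤ η * Dkl p r1)
    (h2 : ∀ p : B → ℝ, (∀ b, 0 ≤ p b) → (∑ b, p b) = 1 →
      Dkl (fun b' => ∑ b, p b * K2 b b') r2 ≤ η * Dkl p r2)
    (P : A × B → ℝ) (hP0 : ∀ x, 0 ≤ P x) (hP1 : ∑ x, P x = 1) :
    Dkl (fun x : A × B => ∑ y : A × B, P y * (K1 y.1 x.1 * K2 y.2 x.2))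
        (fun x : A × B => r1 x.1 * r2 x.2)
      ≤ η * Dkl P (fun x : A × B => r1 x.1 * r2 x.2) := by
  classical
  set P1 : A → ℝ := fun a => ∑ b, P (a, b) with hP1def
  have hP10 : ∀ a, 0 ≤ P1 a := fun a => Finset.sum_nonneg fun b _ => hP0 (a, b)
  have hP1sum : ∑ a, P1 a = 1 := by
    simp only [hP1def]
    rw [← Fintype.sum_prod_type]
    exact hP1
  set Q : A → B → ℝ := fun a' b' => ∑ y : A × B, P y * (K1 y.1 a' * K2 y.2 b') with hQdef
  have hQ0 : ∀ a' b', 0 ≤ Q a' b' := fun a' b' =>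
    Finset.sum_nonneg fun y _ =>
      mul_nonneg (hP0 y) (mul_nonneg (hK1pos _ _).le (hK20 _ _))
  set Z : A → ℝ := fun a' => ∑ a, P1 a * K1 a a' with hZdef
  have hQ1 : ∀ a', (∑ b', Q a' b') = Z a' := by
    intro a'
    simp only [hQdef, hZdef]
    rw [Finset.sum_comm]
    calc ∑ y : A × B, ∑ b', P y * (K1 y.1 a' * K2 y.2 b')
        = ∑ y : A × B, P y * K1 y.1 a' := by
          refine Finset.sum_congr rfl fun y _ => ?_
          rw [← Finset.mul_sum, ← Finset.mul_sum, hK21, mul_one]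
      _ = ∑ a, ∑ b, P (a, b) * K1 a a' := Fintype.sum_prod_type _
      _ = ∑ a, P1 a * K1 a a' := by
          refine Finset.sum_congr rfl fun a _ => ?_
          rw [hP1def, ← Finset.sum_mul]
  have hZpos : ∀ a', 0 < Z a' := by
    intro a'
    have hex : ∃ a, 0 < P1 a := by
      by_contra h
      push_neg at h
      have h0 : ∑ a, P1 a = 0 :=
        Finset.sum_eq_zero fun a _ => le_antisymm (h a) (hP10 a)
      rw [hP1sum] at h0
      norm_num at h0
    obtain ⟨a0, ha0⟩ := hex
    have hle : P1 a0 * K1 a0 a' ≤ Z a' := by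
      rw [hZdef]
      exact Finset.single_le_sum (fun a _ => mul_nonneg (hP10 a) (hK1pos a a').le) (mem_univ a0)
    have := mul_pos ha0 (hK1pos a0 a')
    linarith
  set μ : A → B → ℝ := fun a' b => (∑ a, P (a, b) * K1 a a') / Z a' with hmudef
  have hμ0 : ∀ a' b, 0 ≤ μ a' b := fun a' b =>
    div_nonneg (Finset.sum_nonneg fun a _ => mul_nonneg (hP0 _) (hK1pos _ _).le) (hZpos a').le
  have hμ1 : ∀ a', ∑ b, μ a' b = 1 := by
    intro a'
    simp only [hmudef]
    rw [← Finset.sum_div, Finset.sum_comm]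
    have e : ∑ a, ∑ b, P (a, b) * K1 a a' = Z a' := by
      rw [hZdef]
      refine Finset.sum_congr rfl fun a _ => ?_
      rw [hP1def, ← Finset.sum_mul]
    rw [e, div_self (hZpos a').ne']
  have hQc : ∀ a' b', Q a' b' / Z a' = ∑ b, μ a' b * K2 b b' := by
    intro a' b'
    simp only [hmudef, div_mul_eq_mul_div]
    rw [← Finset.sum_div]
    congr 1
    calc Q a' b' = ∑ a, ∑ b, P (a, b) * (K1 a a' * K2 b b') := Fintype.sum_prod_type _
      _ = ∑ b, ∑ a, P (a, b) * (K1 a a' * K2 b b') := Finset.sum_comm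
      _ = ∑ b, (∑ a, P (a, b) * K1 a a') * K2 b b' := by
          refine Finset.sum_congr rfl fun b _ => ?_
          rw [Finset.sum_mul]
          exact Finset.sum_congr rfl fun a _ => by ring
  set Pc : A → B → ℝ := fun a b => P (a, b) / P1 a with hPcdef
  have hPc0 : ∀ a b, 0 ≤ Pc a b := fun a b => div_nonneg (hP0 _) (hP10 a)
  have hPab_le : ∀ a b, P (a, b) ≤ P1 a := by
    intro a b
    rw [hP1def]
    exact Finset.single_le_sum (fun b' _ => hP0 (a, b')) (mem_univ b)
  have hμmix : ∀ a' b, μ a' b = ∑ a, (P1 a * K1 a a' / Z a') * Pc a b := by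
    intro a' b
    simp only [hmudef, hPcdef]
    rw [Finset.sum_div]
    refine Finset.sum_congr rfl fun a _ => ?_
    by_cases hPa : P1 a = 0
    · have h0 : P (a, b) = 0 := le_antisymm (hPa ▸ hPab_le a b) (hP0 _)
      rw [h0, hPa]
      simp
    · field_simp [hPa, (hZpos a').ne']
  have hwsum : ∀ a', ∑ a, P1 a * K1 a a' / Z a' = 1 := by
    intro a'
    rw [← Finset.sum_div]
    show Z a' / Z a' = 1
    exact div_self (hZpos a').ne'
  have hper : ∀ a', Dkl (fun b' => Q a' b' / Z a') r2
      ≤ η * ∑ a, (P1 a * K1 a a' / Z a') * Dkl (Pc a) r2 := by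
    intro a'
    have e1 : Dkl (fun b' => Q a' b' / Z a') r2
        = Dkl (fun b' => ∑ b, μ a' b * K2 b b') r2 :=
      Dkl_congr (fun b' => hQc a' b') (fun _ => rfl)
    rw [e1]
    calc Dkl (fun b' => ∑ b, μ a' b * K2 b b') r2 ≤ η * Dkl (μ a') r2 :=
          h2 (μ a') (hμ0 a') (hμ1 a')
      _ ≤ η * ∑ a, (P1 a * K1 a a' / Z a') * Dkl (Pc a) r2 := by
          refine mul_le_mul_of_nonneg_left ?_ hη
          have e2 : Dkl (μ a') r2
              = Dkl (fun b => ∑ a, (P1 a * K1 a a' / Z a') * Pc a b) r2 :=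
            Dkl_congr (hμmix a') (fun _ => rfl)
          rw [e2]
          exact Dkl_mix univ _ _ r2
            (fun a _ => div_nonneg (mul_nonneg (hP10 a) (hK1pos a a').le) (hZpos a').le)
            (hwsum a') (fun a _ b => hPc0 a b) hr2
  have chainQ := Dkl_chain Q r1 r2 hQ0 hr1 hr2
  have chainP := Dkl_chain (fun a b => P (a, b)) r1 r2 (fun a b => hP0 _) hr1 hr2
  have eP : Dkl (fun x : A × B => P (x.1, x.2)) (fun x : A × B => r1 x.1 * r2 x.2)
      = Dkl P (fun x : A × B => r1 x.1 * r2 x.2) :=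
    Dkl_congr (fun x => by rw [Prod.mk.eta]) (fun _ => rfl)
  have eQ : Dkl (fun x : A × B => ∑ y : A × B, P y * (K1 y.1 x.1 * K2 y.2 x.2))
        (fun x : A × B => r1 x.1 * r2 x.2)
      = Dkl (fun x : A × B => Q x.1 x.2) (fun x : A × B => r1 x.1 * r2 x.2) :=
    Dkl_congr (fun x => by rw [hQdef]) (fun _ => rfl)
  rw [eQ, chainQ]
  have t1 : Dkl (fun a' => ∑ b', Q a' b') r1 ≤ η * Dkl P1 r1 := by
    have e : Dkl (fun a' => ∑ b', Q a' b') r1 = Dkl (fun a' => ∑ a, P1 a * K1 a a') r1 :=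
      Dkl_congr (fun a' => by rw [hQ1 a', hZdef]) (fun _ => rfl)
    rw [e]
    exact h1 P1 hP10 hP1sum
  have t2 : ∑ a', (∑ b', Q a' b') * Dkl (fun b' => Q a' b' / ∑ c, Q a' c) r2
      ≤ η * ∑ a, P1 a * Dkl (Pc a) r2 := by
    calc ∑ a', (∑ b', Q a' b') * Dkl (fun b' => Q a' b' / ∑ c, Q a' c) r2
        ≤ ∑ a', Z a' * (η * ∑ a, (P1 a * K1 a a' / Z a') * Dkl (Pc a) r2) := by
          refine Finset.sum_le_sum fun a' _ => ?_
          rw [hQ1 a']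
          exact mul_le_mul_of_nonneg_left (hper a') (hZpos a').le
      _ = η * ∑ a, P1 a * Dkl (Pc a) r2 := by
          have e3 : ∀ a', Z a' * (η * ∑ a, (P1 a * K1 a a' / Z a') * Dkl (Pc a) r2)
              = η * ∑ a, (P1 a * K1 a a') * Dkl (Pc a) r2 := by
            intro a'
            rw [mul_left_comm]
            congr 1
            rw [Finset.mul_sum]
            refine Finset.sum_congr rfl fun a _ => ?_
            field_simp [(hZpos a').ne']
          rw [Finset.sum_congr rfl fun a' _ => e3 a', ← Finset.mul_sum]
          congr 1
          rw [Finset.sum_comm]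
          refine Finset.sum_congr rfl fun a _ => ?_
          calc ∑ a', P1 a * K1 a a' * Dkl (Pc a) r2
              = ∑ a', (P1 a * Dkl (Pc a) r2) * K1 a a' :=
                Finset.sum_congr rfl fun a' _ => by ring
            _ = P1 a * Dkl (Pc a) r2 := by rw [← Finset.mul_sum, hK11, mul_one]
  have efin : Dkl P (fun x : A × B => r1 x.1 * r2 x.2)
      = Dkl P1 r1 + ∑ a, P1 a * Dkl (Pc a) r2 := by
    rw [← eP, chainP]
  rw [efin, mul_add]
  exact add_le_add t1 t2

lemma main_aux {S : Type*} [Fintype S] (θ : S → S → ℝ) (q : S → ℝ) (κ : ℝ)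
    (hθpos : ∀ a b, 0 < θ a b) (hθ1 : ∀ a, ∑ b, θ a b = 1)
    (hqpos : ∀ a, 0 < q a) (hq1 : ∑ a, q a = 1)
    (hstat : ∀ b, ∑ a, q a * θ a b = q b)
    (hκ0 : 0 ≤ κ) (hκ1 : κ ≤ 1) (hκθ : ∀ a b, κ * q b ≤ θ a b) :
    ∀ n : ℕ, ∀ p : (Fin n → S) → ℝ, (∀ a, 0 ≤ p a) → (∑ a, p a) = 1 →
      Dkl (fun b : Fin n → S => ∑ a, p a * ∏ i, θ (a i) (b i))
          (fun a : Fin n → S => ∏ i, q (a i))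
        ≤ (1 - κ) * Dkl p (fun a : Fin n → S => ∏ i, q (a i)) := by
  intro n
  induction n with
  | zero =>
    intro p hp0 hp1
    rw [Fintype.sum_unique] at hp1
    simp [Dkl, Fintype.sum_unique, hp1]
  | succ n IH =>
    intro p hp0 hp1
    set e : S × (Fin n → S) ≃ (Fin (n + 1) → S) := Fin.consEquiv (fun _ => S) with hedef
    have he : ∀ x : S × (Fin n → S), e x = Fin.cons x.1 x.2 := fun x => rfl
    set P : S × (Fin n → S) → ℝ := fun x => p (Fin.cons x.1 x.2) with hPdef
    have hP0 : ∀ x, 0 ≤ P x := fun x => hp0 _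
    have hP1 : ∑ x, P x = 1 := by
      rw [← hp1]
      exact Fintype.sum_equiv e _ _ (fun x => by rw [hPdef, he])
    have hprodsum : ∀ y : Fin n → S, ∑ z : Fin n → S, ∏ i, θ (y i) (z i) = 1 := by
      intro y
      rw [← Fintype.piFinset_univ, ← Finset.prod_univ_sum]
      simp [hθ1]
    have key := tensor (A := S) (B := Fin n → S) (1 - κ) (by linarith)
      θ (fun y z => ∏ i, θ (y i) (z i)) q (fun y => ∏ i, q (y i))
      hθpos hθ1
      (fun y z => Finset.prod_nonneg fun i _ => (hθpos _ _).le)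
      hprodsum
      hqpos (fun y => Finset.prod_pos fun i _ => hqpos _)
      (fun pp h0 h1 => sdpi_one θ q κ hθpos hθ1 hqpos hq1 hstat hκ0 hκ1 hκθ pp h0 h1)
      (fun pp h0 h1 => IH pp h0 h1)
      P hP0 hP1
    have gl : Dkl (fun b : Fin (n + 1) → S => ∑ a, p a * ∏ i, θ (a i) (b i))
          (fun a : Fin (n + 1) → S => ∏ i, q (a i))
        = Dkl (fun x : S × (Fin n → S) =>
              ∑ y : S × (Fin n → S), P y * (θ y.1 x.1 * ∏ i, θ (y.2 i) (x.2 i)))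
            (fun x : S × (Fin n → S) => q x.1 * ∏ i, q (x.2 i)) := by
      rw [Dkl_equiv e]
      refine Dkl_congr ?_ ?_
      · intro x
        refine (Fintype.sum_equiv e
          (fun y : S × (Fin n → S) => P y * (θ y.1 x.1 * ∏ i, θ (y.2 i) (x.2 i)))
          (fun a => p a * ∏ i, θ (a i) (e x i)) (fun y => ?_)).symm
        show P y * (θ y.1 x.1 * ∏ i, θ (y.2 i) (x.2 i))
            = p (e y) * ∏ i : Fin (n + 1), θ (e y i) (e x i)
        rw [he y, he x, Fin.prod_univ_succ]
        simp [Fin.cons_zero, Fin.cons_succ, hPdef]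
      · intro x
        show (∏ i : Fin (n + 1), q (e x i)) = q x.1 * ∏ i, q (x.2 i)
        rw [he x, Fin.prod_univ_succ]
        simp [Fin.cons_zero, Fin.cons_succ]
    have gr : Dkl p (fun a : Fin (n + 1) → S => ∏ i, q (a i))
        = Dkl P (fun x : S × (Fin n → S) => q x.1 * ∏ i, q (x.2 i)) := by
      rw [Dkl_equiv e]
      refine Dkl_congr ?_ ?_
      · intro x
        rfl
      · intro x
        show (∏ i : Fin (n + 1), q (e x i)) = q x.1 * ∏ i, q (x.2 i)
        rw [he x, Fin.prod_univ_succ]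
        simp [Fin.cons_zero, Fin.cons_succ]
    rw [gl, gr]
    exact key

/-- Strong data processing inequality for synchronous updating: if `θ : S × S → (0,1)` is a
strictly positive stochastic matrix with stationary distribution `q : S → (0,1)` and
`θ(a,b) ≥ κ q(b)` with `κ > 0`, then for the synchronous product matrix
`θ_n(a,b) = ∏ i, θ (a i) (b i)` on `S^n` and every distribution `p` on `S^n`,
`D(p θ_n ‖ q^{⊗n}) ≤ (1 − κ) D(p ‖ q^{⊗n})`. -/
theorem stmt4 {S : Type*} [Fintype S] (n : ℕ) (hn : 0 < n)
    (θ : S → S → ℝ) (q : S → ℝ) (κ : ℝ)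
    (hθpos : ∀ a b, 0 < θ a b) (hθlt : ∀ a b, θ a b < 1)
    (hθ1 : ∀ a, ∑ b, θ a b = 1)
    (hqpos : ∀ a, 0 < q a) (hqlt : ∀ a, q a < 1) (hq1 : ∑ a, q a = 1)
    (hstat : ∀ b, ∑ a, q a * θ a b = q b)
    (hκ : 0 < κ) (hκθ : ∀ a b, κ * q b ≤ θ a b)
    (p : (Fin n → S) → ℝ) (hp0 : ∀ a, 0 ≤ p a) (hp1 : ∑ a, p a = 1) :
    Dkl (fun b : Fin n → S => ∑ a, p a * ∏ i, θ (a i) (b i)) (fun a : Fin n → S => ∏ i, q (a i))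
      ≤ (1 - κ) * Dkl p (fun a : Fin n → S => ∏ i, q (a i)) := by
  have hS : Nonempty S := by
    by_contra h
    rw [not_nonempty_iff] at h
    rw [Finset.univ_eq_empty, Finset.sum_empty] at hq1
    norm_num at hq1
  obtain ⟨a0⟩ := hS
  have hκ1 : κ ≤ 1 := by
    have h := Finset.sum_le_sum (fun b (_ : b ∈ univ) => hκθ a0 b)
    rw [← Finset.mul_sum, hq1, hθ1, mul_one] at h
    exact h
  exact main_aux θ q κ hθpos hθ1 hqpos hq1 hstat hκ.le hκ1 hκθ n p hp0 hp1
end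

section
/- Let θ be a strictly positive stochastic matrix on a finite set Σ with stationary distribution q, and κ > 0 with θ(a,b) ≥ κ q(b) for all a,b. Let θ̂_n be the asynchronous updating matrix on Σ^n: θ̂_n(a,b) = (1/n) Σ_{i=1}^n θ(a_i,b_i) Π_{j≠i} 1[a_j = b_j]. Then for every probability distribution p on Σ^n, D(p θ̂_n ‖ q^{⊗n}) ≤ (1 − κ/n) D(p ‖ q^{⊗n}). -/
open scoped BigOperators

set_option linter.unusedSectionVars false
set_option linter.unusedVariables false




/-- `1 - 1/t ≤ log t` for `t > 0`. -/
lemma one_sub_inv_le_log {t : ℝ} (ht : 0 < t) : 1 - 1/t ≤ Real.log t := by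
  have h := Real.log_le_sub_one_of_pos (x := 1/t) (by positivity)
  rw [Real.log_div one_ne_zero (ne_of_gt ht), Real.log_one] at h
  linarith

/-- Log-sum inequality. -/
lemma log_sum_ineq {ι : Type*} [Fintype ι] (a b : ι → ℝ)
    (ha : ∀ i, 0 ≤ a i) (hb : ∀ i, 0 ≤ b i) (hab : ∀ i, b i = 0 → a i = 0) :
    (∑ i, a i) * Real.log ((∑ i, a i) / (∑ i, b i)) ≤ ∑ i, a i * Real.log (a i / b i) := by
  set A := ∑ i, a i with hA
  set B := ∑ i, b i with hB
  rcases eq_or_lt_of_le (Finset.sum_nonneg fun i _ => ha i : (0:ℝ) ≤ A) with h0 | hApos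
  · -- A = 0 : every a i = 0
    have hz : ∀ i ∈ Finset.univ, a i = 0 := by
      intro i _
      exact (Finset.sum_eq_zero_iff_of_nonneg (fun i _ => ha i)).1 h0.symm i (Finset.mem_univ i)
    have hA0 : A = 0 := h0.symm
    have : ∀ i ∈ Finset.univ, a i * Real.log (a i / b i) = 0 := by
      intro i hi; rw [hz i hi]; ring
    rw [hA0, Finset.sum_congr rfl this]; simp
  rcases eq_or_lt_of_le (Finset.sum_nonneg fun i _ => hb i : (0:ℝ) ≤ B) with hB0 | hBpos
  · -- B = 0: every b i = 0 hence a i = 0, contradicting A > 0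
    exfalso
    have hz : ∀ i ∈ Finset.univ, b i = 0 :=
      (Finset.sum_eq_zero_iff_of_nonneg (fun i _ => hb i)).1 hB0.symm
    have : A = 0 := Finset.sum_eq_zero fun i hi => hab i (hz i hi)
    linarith
  -- main case
  have key : ∀ i, a i - b i * (A / B) ≤ a i * Real.log (a i / b i) - a i * Real.log (A / B) := by
    intro i
    rcases eq_or_lt_of_le (ha i) with h0 | hai
    · rw [← h0]
      have : 0 ≤ b i * (A/B) := mul_nonneg (hb i) (div_nonneg (le_of_lt hApos) (le_of_lt hBpos))
      simp; linarith
    · have hbi : 0 < b i := by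
        rcases eq_or_lt_of_le (hb i) with h | h
        · exact absurd (hab i h.symm) (ne_of_gt hai)
        · exact h
      have ht : 0 < (a i * B) / (b i * A) := by positivity
      have hlog : a i * Real.log (a i / b i) - a i * Real.log (A / B)
          = a i * Real.log ((a i * B) / (b i * A)) := by
        rw [← mul_sub]
        congr 1
        rw [Real.log_div (ne_of_gt hai) (ne_of_gt hbi), Real.log_div (ne_of_gt hApos) (ne_of_gt hBpos),
          Real.log_div (by positivity) (by positivity), Real.log_mul (ne_of_gt hai) (ne_of_gt hBpos),
          Real.log_mul (ne_of_gt hbi) (ne_of_gt hApos)]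
        ring
      rw [hlog]
      have h1 := one_sub_inv_le_log ht
      have h2 : a i * (1 - 1/((a i * B) / (b i * A))) ≤ a i * Real.log ((a i * B) / (b i * A)) :=
        mul_le_mul_of_nonneg_left h1 (ha i)
      have h3 : a i * (1 - 1/((a i * B) / (b i * A))) = a i - b i * (A / B) := by
        field_simp
      linarith
  have hsum : ∑ i, (a i - b i * (A/B)) ≤ ∑ i, (a i * Real.log (a i / b i) - a i * Real.log (A/B)) :=
    Finset.sum_le_sum (fun i _ => key i)
  have hl : ∑ i, (a i - b i * (A/B)) = A - B * (A/B) := by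
    rw [Finset.sum_sub_distrib, ← Finset.sum_mul]
  have hr : ∑ i, (a i * Real.log (a i / b i) - a i * Real.log (A/B))
      = (∑ i, a i * Real.log (a i / b i)) - A * Real.log (A/B) := by
    rw [Finset.sum_sub_distrib, ← Finset.sum_mul]
  rw [hl, hr] at hsum
  have : B * (A/B) = A := by have hB0 : B ≠ 0 := ne_of_gt hBpos; field_simp
  linarith


/-- Convexity of KL divergence in the first argument. -/
lemma kl_convex {α ι : Type*} [Fintype α] [Fintype ι] (w : ι → ℝ) (ps : ι → α → ℝ) (Q : α → ℝ)
    (hw : ∀ i, 0 ≤ w i) (hw1 : ∑ i, w i = 1) (hps : ∀ i x, 0 ≤ ps i x) (hQ : ∀ x, 0 < Q x) :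
    Dkl (fun x => ∑ i, w i * ps i x) Q ≤ ∑ i, w i * Dkl (ps i) Q := by
  have key : ∀ x, (∑ i, w i * ps i x) * Real.log ((∑ i, w i * ps i x) / Q x)
      ≤ ∑ i, w i * (ps i x * Real.log (ps i x / Q x)) := by
    intro x
    have h := log_sum_ineq (fun i => w i * ps i x) (fun i => w i * Q x)
      (fun i => mul_nonneg (hw i) (hps i x)) (fun i => mul_nonneg (hw i) (hQ x).le)
      (fun i h => by
        rcases mul_eq_zero.1 h with h | h
        · simp [h]
        · exact absurd h (ne_of_gt (hQ x)))
    have hs : ∑ i, w i * Q x = Q x := by rw [← Finset.sum_mul, hw1, one_mul]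
    rw [hs] at h
    refine h.trans (le_of_eq (Finset.sum_congr rfl fun i _ => ?_))
    rcases eq_or_lt_of_le (hw i) with h0 | hwi
    · simp [← h0]
    · rw [mul_div_mul_left _ _ (ne_of_gt hwi)]; ring
  calc Dkl (fun x => ∑ i, w i * ps i x) Q
      ≤ ∑ x, ∑ i, w i * (ps i x * Real.log (ps i x / Q x)) :=
        Finset.sum_le_sum fun x _ => key x
    _ = ∑ i, w i * Dkl (ps i) Q := by
        rw [Finset.sum_comm]
        exact Finset.sum_congr rfl fun i _ => by simp [Dkl, Finset.mul_sum]

/-- Data processing inequality for a stochastic matrix with stationary measure `Q`. -/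
lemma kl_dp {α : Type*} [Fintype α] (T : α → α → ℝ) (p Q : α → ℝ)
    (hT0 : ∀ a b, 0 ≤ T a b) (hT1 : ∀ a, ∑ b, T a b = 1)
    (hQ : ∀ a, 0 < Q a) (hQT : ∀ b, ∑ a, Q a * T a b = Q b) (hp0 : ∀ a, 0 ≤ p a) :
    Dkl (fun b => ∑ a, p a * T a b) Q ≤ Dkl p Q := by
  have key : ∀ b, (∑ a, p a * T a b) * Real.log ((∑ a, p a * T a b) / Q b)
      ≤ ∑ a, (p a * Real.log (p a / Q a)) * T a b := by
    intro b
    have h := log_sum_ineq (fun a => p a * T a b) (fun a => Q a * T a b)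
      (fun a => mul_nonneg (hp0 a) (hT0 a b)) (fun a => mul_nonneg (hQ a).le (hT0 a b))
      (fun a h => by
        rcases mul_eq_zero.1 h with h | h
        · exact absurd h (ne_of_gt (hQ a))
        · simp [h])
    rw [hQT b] at h
    refine h.trans (le_of_eq (Finset.sum_congr rfl fun a _ => ?_))
    rcases eq_or_lt_of_le (hT0 a b) with h0 | hT
    · simp [← h0]
    · rw [mul_div_mul_right _ _ (ne_of_gt hT)]; ring
  calc Dkl (fun b => ∑ a, p a * T a b) Q
      ≤ ∑ b, ∑ a, (p a * Real.log (p a / Q a)) * T a b :=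
        Finset.sum_le_sum fun b _ => key b
    _ = Dkl p Q := by
        rw [Finset.sum_comm]
        refine Finset.sum_congr rfl fun a _ => ?_
        rw [← Finset.mul_sum, hT1 a, mul_one]

/-- Master lemma: summing a function against the "agree off `i`" indicator. -/
lemma sum_agree {S : Type*} [Fintype S] [DecidableEq S] {n : ℕ} (i : Fin n)
    (x : Fin n → S) (F : (Fin n → S) → ℝ) :
    ∑ y : Fin n → S, (∏ j ∈ Finset.univ.erase i, (if x j = y j then (1:ℝ) else 0)) * F y
      = ∑ s : S, F (Function.update x i s) := by
  have h1 : ∀ y : Fin n → S,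
      (∏ j ∈ Finset.univ.erase i, (if x j = y j then (1:ℝ) else 0)) * F y
      = ∑ s : S, if y = Function.update x i s then F y else 0 := by
    intro y
    rw [Finset.prod_boole]
    have hiff : ∀ s : S, y = Function.update x i s ↔
        s = y i ∧ (∀ j ∈ Finset.univ.erase i, x j = y j) := by
      intro s
      constructor
      · intro h
        refine ⟨by rw [h, Function.update_self], fun j hj => ?_⟩
        have hji : j ≠ i := Finset.ne_of_mem_erase hj
        rw [h, Function.update_of_ne hji]
      · rintro ⟨hs, hagr⟩
        funext j
        by_cases hji : j = i
        · subst hji; rw [Function.update_self, hs]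
        · rw [Function.update_of_ne hji, ← hagr j (Finset.mem_erase.2 ⟨hji, Finset.mem_univ j⟩)]
    have : ∀ s : S, (if y = Function.update x i s then F y else 0)
        = if s = y i then (if (∀ j ∈ Finset.univ.erase i, x j = y j) then F y else 0) else 0 := by
      intro s
      by_cases hc : y = Function.update x i s
      · rw [if_pos hc]
        rcases (hiff s).1 hc with ⟨hs, ha⟩
        rw [if_pos hs, if_pos ha]
      · rw [if_neg hc]
        by_cases hs : s = y i
        · by_cases ha : ∀ j ∈ Finset.univ.erase i, x j = y j
          · exact absurd ((hiff s).2 ⟨hs, ha⟩) hc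
          · rw [if_pos hs, if_neg ha]
        · rw [if_neg hs]
    rw [Finset.sum_congr rfl fun s _ => this s, Finset.sum_ite_eq' Finset.univ (y i) _]
    simp only [Finset.mem_univ, if_true]
    by_cases ha : ∀ j ∈ Finset.univ.erase i, x j = y j
    · rw [if_pos ha, if_pos ha, one_mul]
    · rw [if_neg ha, if_neg ha, zero_mul]
  rw [Finset.sum_congr rfl fun y _ => h1 y, Finset.sum_comm]
  refine Finset.sum_congr rfl fun s _ => ?_
  rw [Finset.sum_ite_eq' Finset.univ (Function.update x i s) (fun y => F y)]
  simp


section Ent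
variable {S : Type*} [Fintype S] [DecidableEq S] {n : ℕ}

/-- Indicator that `x` and `y` agree on `A`. -/
def agr (A : Finset (Fin n)) (x y : Fin n → S) : ℝ :=
  ∏ j ∈ A, if x j = y j then (1:ℝ) else 0

/-- Marginal weight of the `A`-coordinates of `x`. -/
noncomputable def mar (A : Finset (Fin n)) (p : (Fin n → S) → ℝ) (x : Fin n → S) : ℝ :=
  ∑ y, agr A x y * p y

/-- Entropy of the marginal on `A`, expressed on the full space. -/
noncomputable def Hent (A : Finset (Fin n)) (p : (Fin n → S) → ℝ) : ℝ :=
  -∑ x, p x * Real.log (mar A p x)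

lemma agr_eq_ite (A : Finset (Fin n)) (x y : Fin n → S) :
    agr A x y = if (∀ j ∈ A, x j = y j) then (1:ℝ) else 0 := by
  unfold agr
  rw [Finset.prod_boole]
  congr

lemma agr_nonneg (A : Finset (Fin n)) (x y : Fin n → S) : 0 ≤ agr A x y := by
  rw [agr_eq_ite]; split <;> norm_num

lemma agr_self (A : Finset (Fin n)) (x : Fin n → S) : agr A x x = 1 := by
  rw [agr_eq_ite, if_pos (fun j _ => rfl)]

lemma mar_nonneg (A : Finset (Fin n)) (p : (Fin n → S) → ℝ) (hp0 : ∀ a, 0 ≤ p a)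
    (x : Fin n → S) : 0 ≤ mar A p x :=
  Finset.sum_nonneg fun y _ => mul_nonneg (agr_nonneg A x y) (hp0 y)

lemma le_mar (A : Finset (Fin n)) (p : (Fin n → S) → ℝ) (hp0 : ∀ a, 0 ≤ p a)
    (x : Fin n → S) : p x ≤ mar A p x := by
  have := Finset.single_le_sum (f := fun y => agr A x y * p y)
    (fun y _ => mul_nonneg (agr_nonneg A x y) (hp0 y)) (Finset.mem_univ x)
  rwa [agr_self, one_mul] at this

lemma mar_congr (A : Finset (Fin n)) (p : (Fin n → S) → ℝ) {x x' : Fin n → S}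
    (h : ∀ j ∈ A, x j = x' j) : mar A p x = mar A p x' := by
  refine Finset.sum_congr rfl fun y _ => ?_
  congr 1
  refine Finset.prod_congr rfl fun j hj => ?_
  rw [h j hj]

lemma mar_univ (p : (Fin n → S) → ℝ) (x : Fin n → S) : mar Finset.univ p x = p x := by
  have : ∀ y : Fin n → S, agr Finset.univ x y * p y = if x = y then p y else 0 := by
    intro y
    rw [agr_eq_ite]
    by_cases h : x = y
    · rw [if_pos h, if_pos fun j _ => by rw [h], one_mul]
    · rw [if_neg h, if_neg fun hc => h (funext fun j => hc j (Finset.mem_univ j)), zero_mul]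
  rw [mar, Finset.sum_congr rfl fun y _ => this y, Finset.sum_ite_eq]
  simp

lemma mar_empty (p : (Fin n → S) → ℝ) (hp1 : ∑ a, p a = 1) (x : Fin n → S) :
    mar ∅ p x = 1 := by
  simp only [mar, agr, Finset.prod_empty, one_mul]
  exact hp1

lemma Hent_empty (p : (Fin n → S) → ℝ) (hp1 : ∑ a, p a = 1) : Hent ∅ p = 0 := by
  simp [Hent, mar_empty p hp1]

/-- Counting: pasting two partial agreements. -/
lemma agr_count {A B : Finset (Fin n)} (hAB : A ∪ B = Finset.univ) (y z : Fin n → S) :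
    ∑ x : Fin n → S, agr A x y * agr B x z = agr (A ∩ B) y z := by
  classical
  set x₀ : Fin n → S := fun j => if j ∈ A then y j else z j with hx₀
  have key : ∀ x : Fin n → S, agr A x y * agr B x z
      = if ((∀ j ∈ A ∩ B, y j = z j) ∧ x = x₀) then (1:ℝ) else 0 := by
    intro x
    rw [agr_eq_ite, agr_eq_ite]
    by_cases hA : ∀ j ∈ A, x j = y j
    · by_cases hB : ∀ j ∈ B, x j = z j
      · rw [if_pos hA, if_pos hB, one_mul, if_pos]
        constructor
        · intro j hj
          rw [← hA j (Finset.mem_of_mem_inter_left hj), hB j (Finset.mem_of_mem_inter_right hj)]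
        · funext j
          by_cases hjA : j ∈ A
          · rw [hA j hjA, hx₀]; simp [hjA]
          · have hjB : j ∈ B := by
              have : j ∈ A ∪ B := hAB ▸ Finset.mem_univ j
              rcases Finset.mem_union.1 this with h | h
              · exact absurd h hjA
              · exact h
            rw [hB j hjB, hx₀]; simp [hjA]
      · rw [if_neg hB, mul_zero, if_neg]
        rintro ⟨hc, rfl⟩
        exact hB fun j hj => by
          by_cases hjA : j ∈ A
          · rw [hx₀]; simp only [hjA, if_pos]
            exact hc j (Finset.mem_inter.2 ⟨hjA, hj⟩)
          · rw [hx₀]; simp [hjA]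
    · rw [if_neg hA, zero_mul, if_neg]
      rintro ⟨hc, rfl⟩
      exact hA fun j hj => by rw [hx₀]; simp [hj]
  rw [Finset.sum_congr rfl fun x _ => key x]
  by_cases hc : ∀ j ∈ A ∩ B, y j = z j
  · have h2 : ∀ x : Fin n → S,
        (if ((∀ j ∈ A ∩ B, y j = z j) ∧ x = x₀) then (1:ℝ) else 0)
          = if x = x₀ then (1:ℝ) else 0 := by
      intro x
      by_cases hx : x = x₀
      · rw [if_pos ⟨hc, hx⟩, if_pos hx]
      · rw [if_neg (fun h => hx h.2), if_neg hx]
    rw [Finset.sum_congr rfl fun x _ => h2 x,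
      Finset.sum_ite_eq' Finset.univ x₀ (fun _ => (1:ℝ)), agr_eq_ite, if_pos hc]
    simp
  · have h2 : ∀ x : Fin n → S,
        (if ((∀ j ∈ A ∩ B, y j = z j) ∧ x = x₀) then (1:ℝ) else 0) = 0 :=
      fun x => if_neg (fun h => hc h.1)
    rw [Finset.sum_congr rfl fun x _ => h2 x, Finset.sum_const_zero, agr_eq_ite, if_neg hc]

/-- Key identity for submodularity. -/
lemma sum_ratio_eq_one {A B : Finset (Fin n)} (hAB : A ∪ B = Finset.univ)
    (p : (Fin n → S) → ℝ) (hp0 : ∀ a, 0 ≤ p a) (hp1 : ∑ a, p a = 1) :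
    ∑ x : Fin n → S, mar A p x * mar B p x / mar (A ∩ B) p x = 1 := by
  classical
  set C := A ∩ B with hC
  have step1 : ∀ x : Fin n → S, mar A p x * mar B p x / mar C p x
      = ∑ y, (agr A x y * p y) * (mar B p x / mar C p x) := by
    intro x
    rw [mar, Finset.sum_mul, Finset.sum_div]
    exact Finset.sum_congr rfl fun y _ => by rw [mul_div_assoc]
  rw [Finset.sum_congr rfl fun x _ => step1 x, Finset.sum_comm]
  have inner : ∀ y : Fin n → S,
      ∑ x, (agr A x y * p y) * (mar B p x / mar C p x) = p y := by
    intro y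
    have t1 : ∀ x : Fin n → S, (agr A x y * p y) * (mar B p x / mar C p x)
        = p y * (agr A x y * mar B p x / mar C p y) := by
      intro x
      by_cases h : ∀ j ∈ A, x j = y j
      · have : mar C p x = mar C p y :=
          mar_congr C p fun j hj => h j (Finset.mem_of_mem_inter_left hj)
        rw [this]; ring
      · rw [agr_eq_ite, if_neg h]; ring
    rw [Finset.sum_congr rfl fun x _ => t1 x, ← Finset.mul_sum, ← Finset.sum_div]
    have t2 : ∑ x, agr A x y * mar B p x = mar C p y := by
      have : ∀ x : Fin n → S, agr A x y * mar B p x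
          = ∑ z, (agr A x y * agr B x z) * p z := by
        intro x
        rw [mar, Finset.mul_sum]
        exact Finset.sum_congr rfl fun z _ => by ring
      rw [Finset.sum_congr rfl fun x _ => this x, Finset.sum_comm]
      refine Finset.sum_congr rfl fun z _ => ?_
      rw [← Finset.sum_mul, agr_count hAB y z]
    rw [t2]
    rcases eq_or_lt_of_le (mar_nonneg C p hp0 y) with h0 | hpos
    · have hpy : p y = 0 := le_antisymm (by rw [← h0.symm] at *; exact (le_mar C p hp0 y).trans_eq h0.symm) (hp0 y)
      rw [hpy]; ring
    · rw [div_self (ne_of_gt hpos), mul_one]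
  rw [Finset.sum_congr rfl fun y _ => inner y, hp1]

/-- Submodularity of entropy. -/
lemma Hent_submod {A B : Finset (Fin n)} (hAB : A ∪ B = Finset.univ)
    (p : (Fin n → S) → ℝ) (hp0 : ∀ a, 0 ≤ p a) (hp1 : ∑ a, p a = 1) :
    Hent (A ∩ B) p + Hent Finset.univ p ≤ Hent A p + Hent B p := by
  classical
  set C := A ∩ B with hC
  have key : ∀ x : Fin n → S,
      p x * (Real.log (mar A p x) + Real.log (mar B p x)
        - Real.log (mar C p x) - Real.log (p x))
      ≤ mar A p x * mar B p x / mar C p x - p x := by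
    intro x
    rcases eq_or_lt_of_le (hp0 x) with h0 | hpx
    · rw [← h0]
      have : 0 ≤ mar A p x * mar B p x / mar C p x :=
        div_nonneg (mul_nonneg (mar_nonneg A p hp0 x) (mar_nonneg B p hp0 x))
          (mar_nonneg C p hp0 x)
      simpa using this
    · have hA : 0 < mar A p x := lt_of_lt_of_le hpx (le_mar A p hp0 x)
      have hB : 0 < mar B p x := lt_of_lt_of_le hpx (le_mar B p hp0 x)
      have hCx : 0 < mar C p x := lt_of_lt_of_le hpx (le_mar C p hp0 x)
      have ht : 0 < mar A p x * mar B p x / (mar C p x * p x) := by positivity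
      have hlog := Real.log_le_sub_one_of_pos ht
      have e1 : Real.log (mar A p x * mar B p x / (mar C p x * p x))
          = Real.log (mar A p x) + Real.log (mar B p x)
            - Real.log (mar C p x) - Real.log (p x) := by
        rw [Real.log_div (by positivity) (by positivity),
          Real.log_mul (ne_of_gt hA) (ne_of_gt hB),
          Real.log_mul (ne_of_gt hCx) (ne_of_gt hpx)]
        ring
      have h2 : p x * Real.log (mar A p x * mar B p x / (mar C p x * p x))
          ≤ p x * (mar A p x * mar B p x / (mar C p x * p x) - 1) :=
        mul_le_mul_of_nonneg_left hlog (hp0 x)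
      have e2 : p x * (mar A p x * mar B p x / (mar C p x * p x) - 1)
          = mar A p x * mar B p x / mar C p x - p x := by
        field_simp
      rw [e1] at h2
      linarith
  have hsum : ∑ x, p x * (Real.log (mar A p x) + Real.log (mar B p x)
        - Real.log (mar C p x) - Real.log (p x)) ≤ 0 := by
    calc _ ≤ ∑ x : Fin n → S, (mar A p x * mar B p x / mar C p x - p x) :=
          Finset.sum_le_sum fun x _ => key x
      _ = 0 := by
          rw [Finset.sum_sub_distrib, sum_ratio_eq_one hAB p hp0 hp1, hp1]; ring
  have expand : ∑ x, p x * (Real.log (mar A p x) + Real.log (mar B p x)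
        - Real.log (mar C p x) - Real.log (p x))
      = (Hent C p + Hent Finset.univ p) - (Hent A p + Hent B p) := by
    simp only [Hent]
    rw [Finset.sum_congr rfl (fun x _ => by
      rw [mar_univ p x]
      ring : ∀ x ∈ Finset.univ,
        p x * (Real.log (mar A p x) + Real.log (mar B p x)
        - Real.log (mar C p x) - Real.log (p x))
        = (p x * Real.log (mar A p x) + p x * Real.log (mar B p x))
          - (p x * Real.log (mar C p x) + p x * Real.log (mar (Finset.univ) p x)))]
    rw [Finset.sum_sub_distrib, Finset.sum_add_distrib, Finset.sum_add_distrib]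
    ring
  linarith [expand ▸ hsum]

/-- Han's inequality, entropy form. -/
lemma han (p : (Fin n → S) → ℝ) (hp0 : ∀ a, 0 ≤ p a) (hp1 : ∑ a, p a = 1) :
    ((n:ℝ) - 1) * Hent Finset.univ p ≤ ∑ i : Fin n, Hent (Finset.univ.erase i) p := by
  classical
  set A : ℕ → Finset (Fin n) := fun k => Finset.univ.filter (fun j => (j:ℕ) < k) with hA
  have hA0 : A 0 = ∅ := by simp [hA]
  have hAn : A n = Finset.univ := by
    ext j; simp [hA, j.isLt]
  have step : ∀ i : Fin n,
      Hent (A (i:ℕ)) p + Hent Finset.univ p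
        ≤ Hent (Finset.univ.erase i) p + Hent (A ((i:ℕ)+1)) p := by
    intro i
    have hu : (Finset.univ.erase i) ∪ A ((i:ℕ)+1) = Finset.univ := by
      ext j
      simp only [Finset.mem_union, Finset.mem_erase, Finset.mem_univ, and_true, true_and,
        Finset.mem_filter, hA, iff_true]
      by_cases h : j = i
      · right; rw [h]; omega
      · left; exact h
    have hi : (Finset.univ.erase i) ∩ A ((i:ℕ)+1) = A (i:ℕ) := by
      ext j
      simp only [Finset.mem_inter, Finset.mem_erase, Finset.mem_univ, and_true, true_and,
        Finset.mem_filter, hA]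
      constructor
      · rintro ⟨hne, hlt⟩
        have : (j:ℕ) ≠ (i:ℕ) := fun hc => hne (Fin.ext hc)
        omega
      · intro hlt
        exact ⟨fun hc => by rw [hc] at hlt; omega, by omega⟩
    have := Hent_submod hu p hp0 hp1
    rw [hi] at this
    linarith
  have hsum : ∑ i : Fin n, (Hent (A (i:ℕ)) p + Hent Finset.univ p)
      ≤ ∑ i : Fin n, (Hent (Finset.univ.erase i) p + Hent (A ((i:ℕ)+1)) p) :=
    Finset.sum_le_sum fun i _ => step i
  rw [Finset.sum_add_distrib, Finset.sum_add_distrib, Finset.sum_const, Finset.card_univ,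
    Fintype.card_fin, nsmul_eq_mul] at hsum
  have tel : ∑ i : Fin n, (Hent (A ((i:ℕ)+1)) p - Hent (A (i:ℕ)) p)
      = Hent Finset.univ p := by
    rw [Fin.sum_univ_eq_sum_range (fun k => Hent (A (k+1)) p - Hent (A k) p) n,
      Finset.sum_range_sub (fun k => Hent (A k) p), hA0, hAn, Hent_empty p hp1, sub_zero]
  rw [Finset.sum_sub_distrib] at tel
  linarith

end Ent

set_option linter.unusedSectionVars false
section Main
variable {S : Type*} [Fintype S] [DecidableEq S] {n : ℕ}

lemma agr_symm (A : Finset (Fin n)) (x y : Fin n → S) : agr A x y = agr A y x := by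
  unfold agr
  refine Finset.prod_congr rfl fun j _ => ?_
  by_cases h : x j = y j
  · rw [if_pos h, if_pos h.symm]
  · rw [if_neg h, if_neg (fun hc => h hc.symm)]

lemma prod_update (q : S → ℝ) (b : Fin n → S) (i : Fin n) (s : S) :
    ∏ j, q (Function.update b i s j)
      = q s * ∏ j ∈ Finset.univ.erase i, q (b j) := by
  rw [← Finset.mul_prod_erase Finset.univ (fun j => q (Function.update b i s j))
    (Finset.mem_univ i), Function.update_self]
  congr 1
  refine Finset.prod_congr rfl fun j hj => ?_
  rw [Function.update_of_ne (Finset.ne_of_mem_erase hj)]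

/-- Row sums of the lifted matrix. -/
lemma rows_one (i : Fin n) (M : S → S → ℝ) (hM1 : ∀ s, ∑ t, M s t = 1) (a : Fin n → S) :
    ∑ b : Fin n → S, M (a i) (b i) * agr (Finset.univ.erase i) a b = 1 := by
  have h1 : ∀ b : Fin n → S, M (a i) (b i) * agr (Finset.univ.erase i) a b
      = (∏ j ∈ Finset.univ.erase i, (if a j = b j then (1:ℝ) else 0)) * M (a i) (b i) := by
    intro b; unfold agr; ring
  rw [Finset.sum_congr rfl fun b _ => h1 b,
    sum_agree i a (fun b => M (a i) (b i))]
  have : ∀ s : S, M (a i) (Function.update a i s i) = M (a i) s := by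
    intro s; rw [Function.update_self]
  rw [Finset.sum_congr rfl fun s _ => this s, hM1]

/-- Station">ity of the product measure for the lifted matrix. -/
lemma stat_lift (i : Fin n) (q : S → ℝ) (M : S → S → ℝ)
    (hM : ∀ t, ∑ s, q s * M s t = q t) (b : Fin n → S) :
    ∑ a : Fin n → S, (∏ j, q (a j)) * (M (a i) (b i) * agr (Finset.univ.erase i) a b)
      = ∏ j, q (b j) := by
  have h1 : ∀ a : Fin n → S, (∏ j, q (a j)) * (M (a i) (b i) * agr (Finset.univ.erase i) a b)
      = (∏ j ∈ Finset.univ.erase i, (if b j = a j then (1:ℝ) else 0))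
        * ((∏ j, q (a j)) * M (a i) (b i)) := by
    intro a
    rw [agr_symm]
    unfold agr; ring
  rw [Finset.sum_congr rfl fun a _ => h1 a,
    sum_agree i b (fun a => (∏ j, q (a j)) * M (a i) (b i))]
  have h2 : ∀ s : S, (∏ j, q (Function.update b i s j)) * M (Function.update b i s i) (b i)
      = (q s * M s (b i)) * ∏ j ∈ Finset.univ.erase i, q (b j) := by
    intro s
    rw [prod_update, Function.update_self]; ring
  rw [Finset.sum_congr rfl fun s _ => h2 s, ← Finset.sum_mul, hM]
  rw [← Finset.mul_prod_erase Finset.univ (fun j => q (b j)) (Finset.mem_univ i)]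

/-- `pQ i` in terms of the marginal. -/
lemma pQ_eq (i : Fin n) (q : S → ℝ) (p : (Fin n → S) → ℝ) (b : Fin n → S) :
    ∑ a, p a * (q (b i) * agr (Finset.univ.erase i) a b)
      = q (b i) * mar (Finset.univ.erase i) p b := by
  rw [mar, Finset.mul_sum]
  refine Finset.sum_congr rfl fun a _ => ?_
  rw [agr_symm (Finset.univ.erase i) b a]
  ring

/-- Divergence of `pQ i` as an expectation under `p`. -/
lemma Dq_eq (i : Fin n) (q : S → ℝ) (hqpos : ∀ s, 0 < q s) (hq1 : ∑ s, q s = 1)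
    (p : (Fin n → S) → ℝ) (hp0 : ∀ a, 0 ≤ p a) :
    Dkl (fun b => q (b i) * mar (Finset.univ.erase i) p b) (fun b => ∏ j, q (b j))
      = ∑ y, p y * Real.log (mar (Finset.univ.erase i) p y
          / ∏ j ∈ Finset.univ.erase i, q (y j)) := by
  set E := Finset.univ.erase i with hE
  have step1 : Dkl (fun b => q (b i) * mar E p b) (fun b => ∏ j, q (b j))
      = ∑ b, q (b i) * (mar E p b * Real.log (mar E p b / ∏ j ∈ E, q (b j))) := by
    unfold Dkl
    refine Finset.sum_congr rfl fun b _ => ?_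
    dsimp only
    have hPb : ∏ j, q (b j) = q (b i) * ∏ j ∈ E, q (b j) :=
      (Finset.mul_prod_erase Finset.univ (fun j => q (b j)) (Finset.mem_univ i)).symm
    rw [hPb, mul_div_mul_left _ _ (ne_of_gt (hqpos (b i)))]
    ring
  rw [step1]
  have step2 : ∀ b : Fin n → S,
      q (b i) * (mar E p b * Real.log (mar E p b / ∏ j ∈ E, q (b j)))
      = ∑ y, agr E b y *
          (q (b i) * (p y * Real.log (mar E p b / ∏ j ∈ E, q (b j)))) := by
    intro b
    set L := Real.log (mar E p b / ∏ j ∈ E, q (b j)) with hL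
    rw [mar, Finset.sum_mul, Finset.mul_sum]
    refine Finset.sum_congr rfl fun y _ => ?_
    ring
  rw [Finset.sum_congr rfl fun b _ => step2 b, Finset.sum_comm]
  refine Finset.sum_congr rfl fun y _ => ?_
  have inv : ∀ b : Fin n → S,
      agr E b y * (q (b i) * (p y * Real.log (mar E p b / ∏ j ∈ E, q (b j))))
      = agr E y b * (q (b i) * (p y * Real.log (mar E p y / ∏ j ∈ E, q (y j)))) := by
    intro b
    rw [agr_symm E b y]
    by_cases h : ∀ j ∈ E, y j = b j
    · have h1 : mar E p b = mar E p y := mar_congr E p fun j hj => (h j hj).symm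
      have h2 : ∏ j ∈ E, q (b j) = ∏ j ∈ E, q (y j) :=
        Finset.prod_congr rfl fun j hj => by rw [h j hj]
      rw [h1, h2]
    · rw [agr_eq_ite, if_neg h, zero_mul, zero_mul]
  rw [Finset.sum_congr rfl fun b _ => inv b]
  have step3 : ∑ b : Fin n → S,
      agr E y b * (q (b i) * (p y * Real.log (mar E p y / ∏ j ∈ E, q (y j))))
      = ∑ s : S, q (Function.update y i s i)
          * (p y * Real.log (mar E p y / ∏ j ∈ E, q (y j))) := by
    have := sum_agree i y
      (fun b => q (b i) * (p y * Real.log (mar E p y / ∏ j ∈ E, q (y j))))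
    rw [← this]
    rfl
  rw [step3]
  have h3 : ∀ s : S, q (Function.update y i s i)
      * (p y * Real.log (mar E p y / ∏ j ∈ E, q (y j)))
      = q s * (p y * Real.log (mar E p y / ∏ j ∈ E, q (y j))) := fun s => by
    rw [Function.update_self]
  rw [Finset.sum_congr rfl fun s _ => h3 s, ← Finset.sum_mul, hq1, one_mul]

lemma sum_Dq_le (q : S → ℝ) (hqpos : ∀ s, 0 < q s)
    (p : (Fin n → S) → ℝ) (hp0 : ∀ a, 0 ≤ p a) (hp1 : ∑ a, p a = 1) :
    ∑ i : Fin n, ∑ y, p y * Real.log (mar (Finset.univ.erase i) p y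
        / ∏ j ∈ Finset.univ.erase i, q (y j))
      ≤ ((n:ℝ) - 1) * Dkl p (fun b => ∏ j, q (b j)) := by
  classical
  have hPpos : ∀ y : Fin n → S, 0 < ∏ j, q (y j) :=
    fun y => Finset.prod_pos fun j _ => hqpos (y j)
  have hQpos : ∀ (i : Fin n) (y : Fin n → S), 0 < ∏ j ∈ Finset.univ.erase i, q (y j) :=
    fun i y => Finset.prod_pos fun j _ => hqpos (y j)
  -- termwise log splitting
  have key1 : ∀ (i : Fin n) (y : Fin n → S),
      p y * Real.log (mar (Finset.univ.erase i) p y / ∏ j ∈ Finset.univ.erase i, q (y j))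
      = p y * Real.log (mar (Finset.univ.erase i) p y)
        - p y * Real.log (∏ j ∈ Finset.univ.erase i, q (y j)) := by
    intro i y
    rcases eq_or_lt_of_le (hp0 y) with h0 | hpy
    · rw [← h0]; ring
    · have hm : 0 < mar (Finset.univ.erase i) p y :=
        lt_of_lt_of_le hpy (le_mar _ p hp0 y)
      rw [Real.log_div (ne_of_gt hm) (ne_of_gt (hQpos i y)), mul_sub]
  have key2 : ∀ (i : Fin n) (y : Fin n → S),
      Real.log (∏ j ∈ Finset.univ.erase i, q (y j))
      = Real.log (∏ j, q (y j)) - Real.log (q (y i)) := by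
    intro i y
    rw [Real.log_prod (fun j _ => ne_of_gt (hqpos (y j))),
      Real.log_prod (fun j _ => ne_of_gt (hqpos (y j))),
      Finset.sum_erase_eq_sub (Finset.mem_univ i)]
  have e1 : ∑ i : Fin n, ∑ y, p y * Real.log (mar (Finset.univ.erase i) p y
        / ∏ j ∈ Finset.univ.erase i, q (y j))
      = (∑ i : Fin n, ∑ y, p y * Real.log (mar (Finset.univ.erase i) p y))
        - ((n:ℝ) - 1) * ∑ y, p y * Real.log (∏ j, q (y j)) := by
    rw [Finset.sum_congr rfl fun i _ => Finset.sum_congr rfl fun y _ => key1 i y]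
    rw [Finset.sum_congr rfl fun i (_ : i ∈ Finset.univ) => Finset.sum_sub_distrib _ _]
    rw [Finset.sum_sub_distrib]
    congr 1
    rw [Finset.sum_comm]
    have inner : ∀ y : Fin n → S,
        ∑ i : Fin n, p y * Real.log (∏ j ∈ Finset.univ.erase i, q (y j))
        = ((n:ℝ) - 1) * (p y * Real.log (∏ j, q (y j))) := by
      intro y
      rw [Finset.sum_congr rfl fun i _ => by rw [key2 i y]]
      rw [Finset.sum_congr rfl fun i (_ : i ∈ Finset.univ) => mul_sub (p y) _ _]
      rw [Finset.sum_sub_distrib, Finset.sum_const, Finset.card_univ, Fintype.card_fin,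
        nsmul_eq_mul, ← Finset.mul_sum,
        ← Real.log_prod (fun j (_ : j ∈ Finset.univ) => ne_of_gt (hqpos (y j)))]
      ring
    rw [Finset.sum_congr rfl fun y _ => inner y, ← Finset.mul_sum]
  have e3 : Dkl p (fun b => ∏ j, q (b j))
      = (∑ y, p y * Real.log (p y)) - ∑ y, p y * Real.log (∏ j, q (y j)) := by
    unfold Dkl
    rw [← Finset.sum_sub_distrib]
    refine Finset.sum_congr rfl fun y _ => ?_
    rcases eq_or_lt_of_le (hp0 y) with h0 | hpy
    · rw [← h0]; ring
    · rw [Real.log_div (ne_of_gt hpy) (ne_of_gt (hPpos y)), mul_sub]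
  have e4 : Hent Finset.univ p = -∑ y, p y * Real.log (p y) := by
    unfold Hent
    rw [Finset.sum_congr rfl fun y (_ : y ∈ Finset.univ) => by rw [mar_univ p y]]
  have e5 : ∀ i : Fin n, ∑ y, p y * Real.log (mar (Finset.univ.erase i) p y)
      = - Hent (Finset.univ.erase i) p := by
    intro i; unfold Hent; ring
  have hh := han p hp0 hp1
  rw [e1, e3, Finset.sum_congr rfl fun i (_ : i ∈ Finset.univ) => e5 i, e4] at *
  have hsum : ∑ i : Fin n, -Hent (Finset.univ.erase i) p
      = -∑ i : Fin n, Hent (Finset.univ.erase i) p := by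
    rw [Finset.sum_neg_distrib]
  rw [hsum]
  nlinarith [hh]

end Main

/-- Strong data processing inequality for asynchronous updating: with `θ`, `q`, `κ` as in the
synchronous case, and the asynchronous matrix
`θ̂_n(a,b) = (1/n) ∑ i, θ(a i, b i) ∏_{j ≠ i} 1[a j = b j]` on `S^n`,
every distribution `p` on `S^n` satisfies `D(p θ̂_n ‖ q^{⊗n}) ≤ (1 − κ/n) D(p ‖ q^{⊗n})`. -/
theorem stmt5 {S : Type*} [Fintype S] [DecidableEq S] (n : ℕ) (hn : 0 < n)
    (θ : S → S → ℝ) (q : S → ℝ) (κ : ℝ)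
    (hθpos : ∀ a b, 0 < θ a b) (hθlt : ∀ a b, θ a b < 1)
    (hθ1 : ∀ a, ∑ b, θ a b = 1)
    (hqpos : ∀ a, 0 < q a) (hqlt : ∀ a, q a < 1) (hq1 : ∑ a, q a = 1)
    (hstat : ∀ b, ∑ a, q a * θ a b = q b)
    (hκ : 0 < κ) (hκθ : ∀ a b, κ * q b ≤ θ a b)
    (p : (Fin n → S) → ℝ) (hp0 : ∀ a, 0 ≤ p a) (hp1 : ∑ a, p a = 1) :
    Dkl
      (fun b : Fin n → S => ∑ a, p a *
        ((1 / (n : ℝ)) * ∑ i, θ (a i) (b i) *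
          ∏ j ∈ Finset.univ.erase i, (if a j = b j then (1 : ℝ) else 0)))
      (fun a : Fin n → S => ∏ i, q (a i))
      ≤ (1 - κ / n) * Dkl p (fun a : Fin n → S => ∏ i, q (a i)) := by
  classical
  have hn0 : (n:ℝ) ≠ 0 := Nat.cast_ne_zero.2 hn.ne'
  have hSne : Nonempty S := by
    rcases isEmpty_or_nonempty S with h | h
    · exfalso; rw [Finset.univ_eq_empty, Finset.sum_empty] at hq1; norm_num at hq1
    · exact h
  set P : (Fin n → S) → ℝ := fun b => ∏ j, q (b j) with hP
  have hPpos : ∀ x : Fin n → S, 0 < P x := fun x => Finset.prod_pos fun j _ => hqpos (x j)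
  -- κ ≤ 1
  have hκ1 : κ ≤ 1 := by
    obtain ⟨a₀⟩ := hSne
    have h1 : ∑ b, κ * q b ≤ ∑ b, θ a₀ b := Finset.sum_le_sum fun b _ => hκθ a₀ b
    rw [hθ1, ← Finset.mul_sum, hq1, mul_one] at h1
    exact h1
  -- rewrite the updated distribution as a uniform mixture
  have hf : (fun b : Fin n → S => ∑ a, p a *
        ((1 / (n : ℝ)) * ∑ i, θ (a i) (b i) *
          ∏ j ∈ Finset.univ.erase i, (if a j = b j then (1 : ℝ) else 0)))
      = fun b => ∑ i : Fin n, (1/(n:ℝ)) *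
          (∑ a, p a * (θ (a i) (b i) * agr (Finset.univ.erase i) a b)) := by
    funext b
    have h1 : ∀ a : Fin n → S, p a *
        ((1 / (n : ℝ)) * ∑ i, θ (a i) (b i) *
          ∏ j ∈ Finset.univ.erase i, (if a j = b j then (1 : ℝ) else 0))
        = ∑ i : Fin n, (1/(n:ℝ)) * (p a * (θ (a i) (b i) * agr (Finset.univ.erase i) a b)) := by
      intro a
      rw [Finset.mul_sum, Finset.mul_sum]
      refine Finset.sum_congr rfl fun i _ => ?_
      unfold agr
      ring
    rw [Finset.sum_congr rfl fun a _ => h1 a, Finset.sum_comm]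
    refine Finset.sum_congr rfl fun i _ => ?_
    rw [← Finset.mul_sum]
  rw [hf]
  -- convexity over the n coordinates
  have hconv : Dkl (fun b => ∑ i : Fin n, (1/(n:ℝ)) *
          (∑ a, p a * (θ (a i) (b i) * agr (Finset.univ.erase i) a b))) P
      ≤ ∑ i : Fin n, (1/(n:ℝ)) *
          Dkl (fun b => ∑ a, p a * (θ (a i) (b i) * agr (Finset.univ.erase i) a b)) P := by
    exact kl_convex (fun _ : Fin n => 1/(n:ℝ))
      (fun i b => ∑ a, p a * (θ (a i) (b i) * agr (Finset.univ.erase i) a b)) P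
      (fun i => by positivity)
      (by rw [Finset.sum_const, Finset.card_univ, Fintype.card_fin, nsmul_eq_mul]; field_simp)
      (fun i b => Finset.sum_nonneg fun a _ => mul_nonneg (hp0 a)
        (mul_nonneg (le_of_lt (hθpos _ _)) (agr_nonneg _ _ _)))
      hPpos
  -- per-coordinate bound
  have hper : ∀ i : Fin n,
      Dkl (fun b => ∑ a, p a * (θ (a i) (b i) * agr (Finset.univ.erase i) a b)) P
      ≤ κ * Dkl (fun b => q (b i) * mar (Finset.univ.erase i) p b) P
        + (1 - κ) * Dkl p P := by
    intro i
    rcases eq_or_lt_of_le hκ1 with hk1 | hklt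
    · -- κ = 1 : θ a b = q b
      have hθq : ∀ s t, θ s t = q t := by
        intro s t
        have hle : ∀ t ∈ Finset.univ, q t ≤ θ s t := fun t _ => by
          have := hκθ s t; rw [hk1, one_mul] at this; exact this
        have hs : ∑ t, q t = ∑ t, θ s t := hq1.trans (hθ1 s).symm
        exact ((Finset.sum_eq_sum_iff_of_le hle).1 hs t (Finset.mem_univ t)).symm
      have heq : (fun b => ∑ a, p a * (θ (a i) (b i) * agr (Finset.univ.erase i) a b))
          = fun b => q (b i) * mar (Finset.univ.erase i) p b := by
        funext b
        rw [← pQ_eq i q p b]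
        exact Finset.sum_congr rfl fun a _ => by rw [hθq (a i) (b i)]
      rw [heq]
      subst hk1
      simp
    · -- κ < 1 : split θ = κ q + (1-κ) θ'
      set θ' : S → S → ℝ := fun s t => (θ s t - κ * q t)/(1-κ) with hθ'
      have h1κ : (0:ℝ) < 1 - κ := by linarith
      have hθ'0 : ∀ s t, 0 ≤ θ' s t := fun s t =>
        div_nonneg (sub_nonneg.2 (hκθ s t)) h1κ.le
      have hθ'1 : ∀ s, ∑ t, θ' s t = 1 := by
        intro s
        rw [hθ']
        rw [← Finset.sum_div, Finset.sum_sub_distrib, hθ1, ← Finset.mul_sum, hq1, mul_one]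
        field_simp
      have hθ's : ∀ t, ∑ s, q s * θ' s t = q t := by
        intro t
        rw [hθ']
        have h2 : ∀ s, q s * ((θ s t - κ * q t)/(1-κ))
            = (q s * θ s t - κ * q t * q s)/(1-κ) := by
          intro s; field_simp
        rw [Finset.sum_congr rfl fun s _ => h2 s, ← Finset.sum_div,
          Finset.sum_sub_distrib, hstat, ← Finset.mul_sum, hq1, mul_one]
        field_simp
      have hdecomp : (fun b => ∑ a, p a * (θ (a i) (b i) * agr (Finset.univ.erase i) a b))
          = fun b => (if True then κ else 1-κ) * (q (b i) * mar (Finset.univ.erase i) p b)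
              + (1-κ) * ∑ a, p a * (θ' (a i) (b i) * agr (Finset.univ.erase i) a b) := by
        funext b
        rw [if_pos trivial, ← pQ_eq i q p b, Finset.mul_sum, Finset.mul_sum,
          ← Finset.sum_add_distrib]
        refine Finset.sum_congr rfl fun a _ => ?_
        have hsp : θ (a i) (b i) = κ * q (b i) + (1-κ) * θ' (a i) (b i) := by
          rw [hθ']; field_simp; ring
        rw [hsp]; ring
      rw [hdecomp]
      have hb : Dkl (fun x => ∑ b : Bool, (if b then κ else 1-κ) *
            (if b then (q (x i) * mar (Finset.univ.erase i) p x)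
              else ∑ a, p a * (θ' (a i) (x i) * agr (Finset.univ.erase i) a x))) P
          ≤ ∑ b : Bool, (if b then κ else 1-κ) *
            Dkl (if b then (fun x => q (x i) * mar (Finset.univ.erase i) p x)
              else (fun x => ∑ a, p a * (θ' (a i) (x i) * agr (Finset.univ.erase i) a x))) P := by
        have := kl_convex (ι := Bool) (fun b => if b then κ else 1-κ)
          (fun b => if b then (fun x => q (x i) * mar (Finset.univ.erase i) p x)
            else (fun x => ∑ a, p a * (θ' (a i) (x i) * agr (Finset.univ.erase i) a x))) P
          (fun b => by cases b <;> simp <;> linarith)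
          (by simp)
          (fun b x => by
            cases b
            · simp only [if_false, Bool.false_eq_true]
              exact Finset.sum_nonneg fun a _ => mul_nonneg (hp0 a)
                (mul_nonneg (hθ'0 _ _) (agr_nonneg _ _ _))
            · simp only [if_true]
              exact mul_nonneg (hqpos _).le (mar_nonneg _ p hp0 x))
          hPpos
        exact this
      simp only [Fintype.sum_bool, if_true, if_false, Bool.false_eq_true] at hb
      have hdp : Dkl (fun x => ∑ a, p a * (θ' (a i) (x i) * agr (Finset.univ.erase i) a x)) P
          ≤ Dkl p P := by
        exact kl_dp (fun a b => θ' (a i) (b i) * agr (Finset.univ.erase i) a b) p P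
          (fun a b => mul_nonneg (hθ'0 _ _) (agr_nonneg _ _ _))
          (fun a => rows_one i θ' hθ'1 a)
          hPpos
          (fun b => stat_lift i q θ' hθ's b)
          hp0
      calc Dkl (fun b => (if True then κ else 1-κ) * (q (b i) * mar (Finset.univ.erase i) p b)
              + (1-κ) * ∑ a, p a * (θ' (a i) (b i) * agr (Finset.univ.erase i) a b)) P
          ≤ κ * Dkl (fun x => q (x i) * mar (Finset.univ.erase i) p x) P
            + (1-κ) * Dkl (fun x => ∑ a, p a * (θ' (a i) (x i) * agr (Finset.univ.erase i) a x)) P := by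
            simpa using hb
        _ ≤ κ * Dkl (fun x => q (x i) * mar (Finset.univ.erase i) p x) P
            + (1-κ) * Dkl p P :=
            add_le_add_right (mul_le_mul_of_nonneg_left hdp h1κ.le) _
  -- sum of marginal divergences, via Han
  have hDq : ∑ i : Fin n, Dkl (fun b => q (b i) * mar (Finset.univ.erase i) p b) P
      ≤ ((n:ℝ) - 1) * Dkl p P := by
    calc ∑ i : Fin n, Dkl (fun b => q (b i) * mar (Finset.univ.erase i) p b) P
        = ∑ i : Fin n, ∑ y, p y * Real.log (mar (Finset.univ.erase i) p y
            / ∏ j ∈ Finset.univ.erase i, q (y j)) :=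
          Finset.sum_congr rfl fun i _ => Dq_eq i q hqpos hq1 p hp0
      _ ≤ ((n:ℝ) - 1) * Dkl p P := sum_Dq_le q hqpos p hp0 hp1
  -- final assembly
  calc Dkl (fun b => ∑ i : Fin n, (1/(n:ℝ)) *
          (∑ a, p a * (θ (a i) (b i) * agr (Finset.univ.erase i) a b))) P
      ≤ ∑ i : Fin n, (1/(n:ℝ)) *
          Dkl (fun b => ∑ a, p a * (θ (a i) (b i) * agr (Finset.univ.erase i) a b)) P := hconv
    _ ≤ ∑ i : Fin n, (1/(n:ℝ)) *
          (κ * Dkl (fun b => q (b i) * mar (Finset.univ.erase i) p b) P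
            + (1 - κ) * Dkl p P) :=
        Finset.sum_le_sum fun i _ => mul_le_mul_of_nonneg_left (hper i) (by positivity)
    _ = (κ/(n:ℝ)) * (∑ i : Fin n, Dkl (fun b => q (b i) * mar (Finset.univ.erase i) p b) P)
          + (1 - κ) * Dkl p P := by
        have hterm : ∀ i ∈ Finset.univ, (1/(n:ℝ)) *
            (κ * Dkl (fun b => q (b i) * mar (Finset.univ.erase i) p b) P
              + (1 - κ) * Dkl p P)
            = (κ/(n:ℝ)) * Dkl (fun b => q (b i) * mar (Finset.univ.erase i) p b) P
              + (1/(n:ℝ)) * ((1 - κ) * Dkl p P) := fun i _ => by ring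
        rw [Finset.sum_congr rfl hterm, Finset.sum_add_distrib, ← Finset.mul_sum,
          Finset.sum_const, Finset.card_univ, Fintype.card_fin, nsmul_eq_mul]
        congr 1
        field_simp
    _ ≤ (κ/(n:ℝ)) * (((n:ℝ) - 1) * Dkl p P) + (1 - κ) * Dkl p P :=
        add_le_add_left (mul_le_mul_of_nonneg_left hDq (by positivity)) _
    _ = (1 - κ / n) * Dkl p P := by
        field_simp
        ring
end

section
/- Suppose D : [0,∞) × ℕ → [0,∞) satisfies D(t, n) ≤ α₀ n^d e^{−κt} + β₀ n^{d−1} for constants α₀, β₀ ≥ 0, κ > 0, d ≥ 1 (uniformly over a family of initial conditions), together with the bootstrap inequality D_A(t) ≤ D_B(t)/m^d + H(ε) + ε n^d c whenever B contains m^d disjoint translates of a suitable enlargement of A (as in the bootstrap lemma). Then choosing ε_t = e^{−κt} and m_t = e^{κt}, one obtains for every 0 < β₁ < κ a constant α₁ > 0 such that D_A(t) ≤ α₁ e^{−β₁ t} n^d for all t ≥ 0 and all regions A of diameter n. In particular, combining with Pinsker's inequality ‖μ − λ‖_TV ≤ √(D(μ‖λ)/2), the total variation distance on A is at most √(α₁/2)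 · e^{−β₁ t/2} · n^{d/2}. -/
set_option maxHeartbeats 1000000


/-- Quantitative bootstrapping: suppose `DA t n` (the supremal relative entropy at time `t` of
regions of diameter `n`, over all initial conditions) is nonnegative and satisfies
(i) the decay-up-to-boundary bound `DA t n ≤ α₀ n^d e^{−κt} + β₀ n^{d−1}`, and
(ii) the bootstrap inequality
`DA t n ≤ DA t (m(n + 2 R(t,ε,n)))/m^d + H(ε) + ε n^d c`, where the enlargement radius
`R(t,ε,n)` grows at most linearly in `t` and logarithmically in `n` and `1/ε`.
Then for every `0 < β₁ < κ` there is `α₁ > 0` with `DA t n ≤ α₁ e^{−β₁ t} n^d`; and via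
Pinsker's inequality the total variation distance is at most
`√(α₁/2) e^{−β₁ t/2} n^{d/2}`. -/
theorem stmt19
    (d : ℕ) (hd : 1 ≤ d)
    (α₀ β₀ : ℝ) (hα₀ : 0 ≤ α₀) (hβ₀ : 0 ≤ β₀)
    (κ c : ℝ) (hκ : 0 < κ) (hc : 0 < c)
    (DA : ℝ → ℕ → ℝ)
    (hDnonneg : ∀ t n, 0 ≤ DA t n)
    (hdecay : ∀ t : ℝ, 0 ≤ t → ∀ n : ℕ, 1 ≤ n →
      DA t n ≤ α₀ * (n : ℝ) ^ d * Real.exp (-κ * t) + β₀ * (n : ℝ) ^ (d - 1))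
    (R : ℝ → ℝ → ℕ → ℕ) (r₁ r₂ : ℝ) (hr₁ : 0 ≤ r₁) (hr₂ : 0 ≤ r₂)
    (hR : ∀ t : ℝ, 0 ≤ t → ∀ ε : ℝ, 0 < ε → ∀ n : ℕ, 1 ≤ n →
      (R t ε n : ℝ) ≤ r₁ * t + r₂ * Real.log n + r₂ * Real.log (1 / ε))
    (hboot : ∀ t : ℝ, 0 ≤ t → ∀ n : ℕ, 1 ≤ n → ∀ ε : ℝ, 0 < ε → ε < 1 / 2 →
      ∀ m : ℕ, 1 ≤ m →
        DA t n ≤ DA t (m * (n + 2 * R t ε n)) / (m : ℝ) ^ d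
          + (-(ε * Real.log ε) - (1 - ε) * Real.log (1 - ε))
          + ε * (n : ℝ) ^ d * c) :
    ∀ β₁ : ℝ, 0 < β₁ → β₁ < κ →
      ∃ α₁ : ℝ, 0 < α₁ ∧
        ∀ t : ℝ, 0 ≤ t → ∀ n : ℕ, 1 ≤ n →
          DA t n ≤ α₁ * Real.exp (-β₁ * t) * (n : ℝ) ^ d ∧
          ∀ TV : ℝ, TV ≤ Real.sqrt (DA t n / 2) →
            TV ≤ Real.sqrt (α₁ / 2) * Real.exp (-(β₁ / 2) * t) * (n : ℝ) ^ ((d : ℝ) / 2) := by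
  intro β₁ hβ₁ hβκ
  have hδ : 0 < κ - β₁ := by linarith
  set δ : ℝ := κ - β₁ with hδdef
  set A : ℝ := 1 + 2*r₂ with hAdef
  set B : ℝ := 2*(r₁ + r₂*κ) with hBdef
  have hA0 : 0 ≤ A := by rw [hAdef]; linarith
  have hA1 : 1 ≤ A := by rw [hAdef]; linarith
  have hB0 : 0 ≤ B := by rw [hBdef]; linarith [mul_nonneg hr₂ hκ.le]
  set K : ℝ := A + B*((d:ℝ)+1)/δ with hKdef
  have hK0 : 0 ≤ K := by
    have h1 : (0:ℝ) ≤ B*((d:ℝ)+1)/δ :=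
      div_nonneg (mul_nonneg hB0 (by positivity)) hδ.le
    rw [hKdef]; linarith
  set M : ℝ := α₀ * K^d + κ/δ + 2 + c with hMdef
  have hM0 : 0 < M := by
    have h1 : 0 ≤ α₀ * K^d := mul_nonneg hα₀ (pow_nonneg hK0 d)
    have h2 : 0 < κ/δ := div_pos hκ hδ
    rw [hMdef]; linarith
  clear_value M K B A δ
  refine ⟨M + 2*(α₀+β₀) + 1, by linarith, ?_⟩
  intro t ht n hn
  have hn1 : (1:ℝ) ≤ (n:ℝ) := by exact_mod_cast hn
  have hnd1 : (1:ℝ) ≤ (n:ℝ)^d := one_le_pow₀ hn1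
  have hnd0 : (0:ℝ) ≤ (n:ℝ)^d := by linarith
  have hEβ : 0 < Real.exp (-β₁*t) := Real.exp_pos _
  have hδt0 : 0 ≤ δ*t := mul_nonneg hδ.le ht
  have key : DA t n ≤ (M + 2*(α₀+β₀) + 1) * Real.exp (-β₁*t) * (n:ℝ)^d := by
    by_cases hcase : Real.exp (-κ*t) < 1/2
    · -- large time: bootstrap
      set ε : ℝ := Real.exp (-κ*t) with hεdef
      have hε0 : 0 < ε := Real.exp_pos _
      set Rn : ℕ := R t ε n with hRndef
      set N2 : ℕ := n + 2 * Rn with hN2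
      set Q : ℝ := (N2:ℝ) with hQdef
      have hQcast : Q = (n:ℝ) + 2*(Rn:ℝ) := by rw [hQdef, hN2]; push_cast; ring
      have hRn0 : (0:ℝ) ≤ (Rn:ℝ) := Nat.cast_nonneg _
      have hQ1 : (1:ℝ) ≤ Q := by rw [hQcast]; linarith
      have hQ0 : (0:ℝ) ≤ Q := by linarith
      set m : ℕ := ⌈β₀ * Q^(d-1) * Real.exp (κ*t)⌉₊ + 1 with hmdef
      have hm1 : 1 ≤ m := Nat.le_add_left 1 _
      have hmR : (1:ℝ) ≤ (m:ℝ) := by exact_mod_cast hm1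
      have hmpos : (0:ℝ) < (m:ℝ) := by linarith
      have hmne : (m:ℝ) ≠ 0 := ne_of_gt hmpos
      have hmge : β₀ * Q^(d-1) * Real.exp (κ*t) ≤ (m:ℝ) := by
        have h1 := Nat.le_ceil (β₀ * Q^(d-1) * Real.exp (κ*t))
        have h2 : ((⌈β₀ * Q^(d-1) * Real.exp (κ*t)⌉₊ : ℕ):ℝ) ≤ (m:ℝ) := by
          rw [hmdef]; push_cast; linarith
        linarith
      clear_value m Q N2 Rn ε
      have hN21 : 1 ≤ N2 := by rw [hN2]; exact le_trans hn (Nat.le_add_right n _)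
      have hbig1 : 1 ≤ m * N2 := by
        calc 1 = 1 * 1 := by ring
        _ ≤ m * N2 := Nat.mul_le_mul hm1 hN21
      have hdec := hdecay t ht (m * N2) hbig1
      have hcastbig : ((m*N2 : ℕ):ℝ) = (m:ℝ) * Q := by rw [hQdef]; push_cast; ring
      rw [hcastbig, ← hεdef] at hdec
      have hb := hboot t ht n hn ε hε0 hcase m hm1
      rw [← hRndef, ← hN2] at hb
      have hd1 : d - 1 + 1 = d := Nat.succ_pred_eq_of_pos hd
      have hpowd : (m:ℝ)^d = (m:ℝ)^(d-1) * (m:ℝ) := by rw [← hd1, pow_succ, hd1]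
      have hdiv : (α₀ * ((m:ℝ)*Q)^d * ε + β₀ * ((m:ℝ)*Q)^(d-1)) / (m:ℝ)^d
          = α₀ * Q^d * ε + β₀ * Q^(d-1) / (m:ℝ) := by
        rw [mul_pow, mul_pow, hpowd]
        have hmp : ((m:ℝ))^(d-1) ≠ 0 := pow_ne_zero _ hmne
        field_simp
      have hpowpos : (0:ℝ) < (m:ℝ)^d := pow_pos hmpos d
      have hDdiv : DA t (m * N2) / (m:ℝ)^d ≤ α₀ * Q^d * ε + β₀ * Q^(d-1) / (m:ℝ) := by
        rw [← hdiv]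
        exact div_le_div_of_nonneg_right hdec hpowpos.le
      -- boundary term
      have hexp1 : Real.exp (κ*t) * ε = 1 := by
        rw [hεdef, ← Real.exp_add]
        norm_num
      have hbdry : β₀ * Q^(d-1) / (m:ℝ) ≤ ε := by
        rw [div_le_iff₀ hmpos]
        have h1 := mul_le_mul_of_nonneg_right hmge hε0.le
        calc β₀ * Q^(d-1) = β₀ * Q^(d-1) * (Real.exp (κ*t) * ε) := by rw [hexp1]; ring
        _ = β₀ * Q^(d-1) * Real.exp (κ*t) * ε := by ring
        _ ≤ (m:ℝ) * ε := h1
        _ = ε * (m:ℝ) := by ring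
      -- entropy term
      have hlogε : Real.log ε = -κ*t := by rw [hεdef, Real.log_exp]
      have h1ε : (0:ℝ) < 1 - ε := by linarith
      have hH : -(ε * Real.log ε) - (1-ε) * Real.log (1-ε) ≤ ε*(κ*t) + ε := by
        have hli : Real.log (1-ε)⁻¹ ≤ (1-ε)⁻¹ - 1 :=
          Real.log_le_sub_one_of_pos (by positivity)
        rw [Real.log_inv] at hli
        have h3 : (1-ε) * (-Real.log (1-ε)) ≤ (1-ε) * ((1-ε)⁻¹ - 1) :=
          mul_le_mul_of_nonneg_left (by linarith) h1ε.le
        have h4 : (1-ε) * ((1-ε)⁻¹ - 1) = ε := by field_simp; ring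
        rw [hlogε]
        linarith [h3, h4]
      -- Q growth
      have hloginv : Real.log (1/ε) = κ*t := by
        have hh : (1:ℝ)/ε = Real.exp (κ*t) := by
          rw [hεdef, one_div, ← Real.exp_neg]
          norm_num
        rw [hh, Real.log_exp]
      have hRb := hR t ht ε hε0 n hn
      rw [hloginv, ← hRndef] at hRb
      have hlogn : Real.log n ≤ (n:ℝ) := by
        have := Real.log_le_sub_one_of_pos (show (0:ℝ) < (n:ℝ) by linarith)
        linarith
      have hQle : Q ≤ (n:ℝ) * (A + B*t) := by
        have a1 : r₂ * Real.log n ≤ r₂ * (n:ℝ) := mul_le_mul_of_nonneg_left hlogn hr₂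
        have a2 : r₁*t ≤ r₁*t*(n:ℝ) :=
          le_mul_of_one_le_right (mul_nonneg hr₁ ht) hn1
        have a3 : r₂*(κ*t) ≤ r₂*(κ*t)*(n:ℝ) :=
          le_mul_of_one_le_right (mul_nonneg hr₂ (mul_nonneg hκ.le ht)) hn1
        rw [hQcast, hAdef, hBdef]
        linarith [hRb, a1, a2, a3]
      -- (A+Bt)^d ≤ K^d exp(δ t)
      have hdd : (0:ℝ) < (d:ℝ)+1 := by positivity
      have hs0 : 0 ≤ δ*t/((d:ℝ)+1) := by positivity
      have hes : 1 ≤ Real.exp (δ*t/((d:ℝ)+1)) := Real.one_le_exp hs0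
      have htle : t ≤ ((d:ℝ)+1)/δ * Real.exp (δ*t/((d:ℝ)+1)) := by
        have h := Real.add_one_le_exp (δ*t/((d:ℝ)+1))
        have h2 : δ*t/((d:ℝ)+1) ≤ Real.exp (δ*t/((d:ℝ)+1)) := by linarith
        rw [div_le_iff₀ hdd] at h2
        rw [div_mul_eq_mul_div, le_div_iff₀ hδ]
        linarith
      have hABK : A + B*t ≤ K * Real.exp (δ*t/((d:ℝ)+1)) := by
        have h1 : B*t ≤ B*(((d:ℝ)+1)/δ * Real.exp (δ*t/((d:ℝ)+1))) :=
          mul_le_mul_of_nonneg_left htle hB0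
        have h2 : A ≤ A * Real.exp (δ*t/((d:ℝ)+1)) := le_mul_of_one_le_right hA0 hes
        rw [hKdef]
        have e : (A + B*((d:ℝ)+1)/δ) * Real.exp (δ*t/((d:ℝ)+1))
            = A * Real.exp (δ*t/((d:ℝ)+1)) + B*(((d:ℝ)+1)/δ * Real.exp (δ*t/((d:ℝ)+1))) := by
          ring
        rw [e]
        linarith [h1, h2]
      have hAB0 : 0 ≤ A + B*t := by
        have := mul_nonneg hB0 ht
        linarith
      have hABd : (A+B*t)^d ≤ K^d * Real.exp (δ*t) := by
        calc (A+B*t)^d ≤ (K * Real.exp (δ*t/((d:ℝ)+1)))^d := pow_le_pow_left₀ hAB0 hABK d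
        _ = K^d * (Real.exp (δ*t/((d:ℝ)+1)))^d := by rw [mul_pow]
        _ = K^d * Real.exp ((d:ℝ) * (δ*t/((d:ℝ)+1))) := by rw [Real.exp_nat_mul]
        _ ≤ K^d * Real.exp (δ*t) := by
            apply mul_le_mul_of_nonneg_left _ (pow_nonneg hK0 d)
            apply Real.exp_le_exp.mpr
            rw [mul_div_assoc', div_le_iff₀ hdd]
            linarith [hδt0]
      -- exponential splitting
      have hεsplit : ε = Real.exp (-β₁*t) * Real.exp (-δ*t) := by
        rw [hεdef, ← Real.exp_add]
        congr 1
        rw [hδdef]; ring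
      have hexpδ : Real.exp (δ*t) * Real.exp (-δ*t) = 1 := by
        rw [← Real.exp_add]
        norm_num
      have hεE : Real.exp (δ*t) * ε = Real.exp (-β₁*t) := by
        rw [hεsplit]
        calc Real.exp (δ*t) * (Real.exp (-β₁*t) * Real.exp (-δ*t))
            = (Real.exp (δ*t) * Real.exp (-δ*t)) * Real.exp (-β₁*t) := by ring
        _ = Real.exp (-β₁*t) := by rw [hexpδ]; ring
      have hδ1 : Real.exp (-δ*t) ≤ 1 := Real.exp_le_one_iff.mpr (by linarith)
      have ht4 : ε ≤ Real.exp (-β₁*t) := by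
        rw [hεsplit]
        exact mul_le_of_le_one_right hEβ.le hδ1
      have htδ : t * Real.exp (-δ*t) ≤ 1/δ := by
        have h5 : δ*t*Real.exp (-δ*t) ≤ Real.exp (δ*t)*Real.exp (-δ*t) :=
          mul_le_mul_of_nonneg_right (by linarith [Real.add_one_le_exp (δ*t)])
            (Real.exp_pos _).le
        rw [hexpδ] at h5
        rw [le_div_iff₀ hδ]
        linarith [h5]
      -- term bounds
      have hQd : Q^d ≤ (n:ℝ)^d * (K^d * Real.exp (δ*t)) := by
        calc Q^d ≤ ((n:ℝ)*(A+B*t))^d := pow_le_pow_left₀ hQ0 hQle d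
        _ = (n:ℝ)^d * (A+B*t)^d := by rw [mul_pow]
        _ ≤ (n:ℝ)^d * (K^d * Real.exp (δ*t)) := mul_le_mul_of_nonneg_left hABd hnd0
      have t1 : α₀ * Q^d * ε ≤ α₀ * K^d * (n:ℝ)^d * Real.exp (-β₁*t) := by
        calc α₀ * Q^d * ε ≤ α₀ * ((n:ℝ)^d * (K^d * Real.exp (δ*t))) * ε :=
          mul_le_mul_of_nonneg_right (mul_le_mul_of_nonneg_left hQd hα₀) hε0.le
        _ = α₀ * K^d * (n:ℝ)^d * (Real.exp (δ*t) * ε) := by ring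
        _ = α₀ * K^d * (n:ℝ)^d * Real.exp (-β₁*t) := by rw [hεE]
      have t3 : ε*(κ*t) ≤ (κ/δ) * Real.exp (-β₁*t) := by
        have h1 : κ*(t*Real.exp (-δ*t)) ≤ κ*(1/δ) := mul_le_mul_of_nonneg_left htδ hκ.le
        have h2 := mul_le_mul_of_nonneg_right h1 hEβ.le
        calc ε*(κ*t) = κ*(t*Real.exp (-δ*t)) * Real.exp (-β₁*t) := by rw [hεsplit]; ring
        _ ≤ κ*(1/δ) * Real.exp (-β₁*t) := h2
        _ = (κ/δ) * Real.exp (-β₁*t) := by ring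
      have t5 : ε * (n:ℝ)^d * c ≤ Real.exp (-β₁*t) * (n:ℝ)^d * c :=
        mul_le_mul_of_nonneg_right (mul_le_mul_of_nonneg_right ht4 hnd0) hc.le
      -- assemble
      have hsum : DA t n ≤ α₀ * Q^d * ε + β₀ * Q^(d-1)/(m:ℝ)
          + (ε*(κ*t) + ε) + ε * (n:ℝ)^d * c := by
        calc DA t n ≤ DA t (m * N2) / (m:ℝ)^d
            + (-(ε * Real.log ε) - (1-ε) * Real.log (1-ε)) + ε * (n:ℝ)^d * c := hb
        _ ≤ (α₀ * Q^d * ε + β₀ * Q^(d-1)/(m:ℝ)) + (ε*(κ*t) + ε) + ε * (n:ℝ)^d * c := by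
            gcongr
        _ = _ := by ring
      have hfin : DA t n ≤ M * Real.exp (-β₁*t) * (n:ℝ)^d := by
        have h2 : β₀ * Q^(d-1)/(m:ℝ) ≤ Real.exp (-β₁*t) := le_trans hbdry ht4
        have g1 : Real.exp (-β₁*t) ≤ Real.exp (-β₁*t) * (n:ℝ)^d :=
          le_mul_of_one_le_right hEβ.le hnd1
        have g2 : (κ/δ)*Real.exp (-β₁*t) ≤ (κ/δ)*(Real.exp (-β₁*t) * (n:ℝ)^d) :=
          mul_le_mul_of_nonneg_left g1 (div_pos hκ hδ).le
        rw [hMdef]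
        linarith [hsum, t1, t3, t5, h2, ht4, g1, g2]
      have hextra : 0 ≤ (2*(α₀+β₀) + 1) * Real.exp (-β₁*t) * (n:ℝ)^d := by positivity
      linarith [hfin, hextra]
    · -- small time
      push_neg at hcase
      have hEκ : Real.exp (-κ*t) ≤ 1 :=
        Real.exp_le_one_iff.mpr (by linarith [mul_nonneg hκ.le ht])
      have hEβhalf : 1/2 ≤ Real.exp (-β₁*t) := by
        refine le_trans hcase (Real.exp_le_exp.mpr ?_)
        linarith [mul_nonneg (sub_nonneg.mpr hβκ.le) ht]
      have hdec := hdecay t ht n hn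
      have hpow : (n:ℝ)^(d-1) ≤ (n:ℝ)^d := pow_le_pow_right₀ hn1 (Nat.sub_le d 1)
      have h1 : DA t n ≤ (α₀+β₀) * (n:ℝ)^d := by
        have b1 : α₀ * (n:ℝ)^d * Real.exp (-κ*t) ≤ α₀ * (n:ℝ)^d * 1 :=
          mul_le_mul_of_nonneg_left hEκ (mul_nonneg hα₀ hnd0)
        have b2 : β₀ * (n:ℝ)^(d-1) ≤ β₀ * (n:ℝ)^d := mul_le_mul_of_nonneg_left hpow hβ₀
        linarith [hdec, b1, b2]
      have g1 : (α₀+β₀)*(n:ℝ)^d ≤ (α₀+β₀)*(n:ℝ)^d*(2*Real.exp (-β₁*t)) :=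
        le_mul_of_one_le_right (mul_nonneg (by linarith) hnd0) (by linarith)
      linarith [h1, g1, mul_nonneg hM0.le (mul_nonneg hEβ.le hnd0),
        mul_nonneg hEβ.le hnd0]
  refine ⟨key, ?_⟩
  intro TV hTV
  refine hTV.trans ?_
  have hα₁ : (0:ℝ) < M + 2*(α₀+β₀) + 1 := by linarith
  have h1 : DA t n / 2 ≤ ((M + 2*(α₀+β₀) + 1) * Real.exp (-β₁*t) * (n:ℝ)^d)/2 :=
    div_le_div_of_nonneg_right key (by norm_num)
  refine (Real.sqrt_le_sqrt h1).trans (le_of_eq ?_)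
  have e1 : ((M + 2*(α₀+β₀) + 1) * Real.exp (-β₁*t) * (n:ℝ)^d)/2
      = ((M + 2*(α₀+β₀) + 1)/2) * (Real.exp (-β₁*t) * (n:ℝ)^d) := by ring
  rw [e1, Real.sqrt_mul (by positivity), Real.sqrt_mul hEβ.le]
  have e2 : Real.sqrt (Real.exp (-β₁*t)) = Real.exp (-(β₁/2)*t) := by
    rw [show -β₁*t = (-(β₁/2)*t) + (-(β₁/2)*t) by ring, Real.exp_add,
      Real.sqrt_mul_self (Real.exp_pos _).le]
  have e3 : Real.sqrt ((n:ℝ)^d) = (n:ℝ)^((d:ℝ)/2) := by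
    rw [Real.sqrt_eq_rpow, ← Real.rpow_natCast (n:ℝ) d,
      ← Real.rpow_mul (Nat.cast_nonneg n)]
    congr 1
    ring
  rw [e2, e3, mul_assoc]
end
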